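/- arXiv:2206.00824 — 2 statements merged into one kernel-verified Lean document; each statement's English description precedes it below -/
import Mathlib

section
/- (Theorem 3) Let d ≥ 1 and suppose the tensor Θ: ℤ^d × ℤ^d × ℤ^d → ℂ satisfies sup_{j,k,ℓ∈ℤ^d} |Θ(j,k,ℓ)| ⟨|j−k|+|j−ℓ|⟩^{2N} < ∞ for some N > d, and let b ∈ c₀(ℤ^d). Then the bilinear commutators [𝒯_Θ, b]_i, i = 1, 2, are compact bilinear operators from ℓ^p(ℤ^d) × ℓ^q(ℤ^d) to ℓ^r(ℤ^d) for any 1 ≤ p, q ≤ ∞ and 1 ≤ r < ∞ with 1/p + 1/q = 1/r; that is, the set {[𝒯_Θ, b]_i(f,g) : ‖f‖_{ℓ^p} ≤ 1, ‖g‖_{ℓ^q} ≤ 1} is totally bounded in ℓ^r(ℤ^d). -/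
open scoped ENNReal NNReal BigOperators

noncomputable section

/-- The integer lattice `ℤ^d`. -/
abbrev Zd (d : ℕ) := Fin d → ℤ

/-- Euclidean norm `|j|` of an integer vector `j ∈ ℤ^d`. -/
def znorm {d : ℕ} (j : Zd d) : ℝ := Real.sqrt (∑ i, ((j i : ℝ)) ^ 2)

/-- Euclidean norm of a real vector. -/
def rnorm {d : ℕ} (x : Fin d → ℝ) : ℝ := Real.sqrt (∑ i, (x i) ^ 2)

/-- Japanese bracket `⟨x⟩ = (1 + x²)^{1/2}`. -/
def jb (x : ℝ) : ℝ := Real.sqrt (1 + x ^ 2)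

/-- The discrete bilinear operator `𝒯_Θ` (named `Tbil` here) associated with an infinite tensor `Θ`:
`(𝒯_Θ(f,g))_j = Σ_k Σ_ℓ Θ(j,k,ℓ) f_k g_ℓ`. -/
def Tbil {d : ℕ} (Θ : Zd d → Zd d → Zd d → ℂ) (f g : Zd d → ℂ) : Zd d → ℂ :=
  fun j => ∑' k, ∑' l, Θ j k l * f k * g l

/-- `ℓ^p`-type norm (extended-real valued) of a family of nonnegative extended reals,
with the usual modification (supremum) when `p = ∞`. -/
def nestNorm {ι : Type*} (p : ℝ≥0∞) (F : ι → ℝ≥0∞) : ℝ≥0∞ :=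
  if p = ∞ then ⨆ i, F i else (∑' i, F i ^ p.toReal) ^ (1 / p.toReal)

/-- The weighted `ℓ^p_s(ℤ^d)` norm `(Σ_k ⟨k⟩^{sp} |f_k|^p)^{1/p}`. -/
def wlpNorm {d : ℕ} (p : ℝ≥0∞) (s : ℝ) (f : Zd d → ℂ) : ℝ≥0∞ :=
  nestNorm p fun k => ENNReal.ofReal (jb (znorm k) ^ s * ‖f k‖)

/-- The `ℓ^p(ℤ^d)` norm. -/
def lpNorm {d : ℕ} (p : ℝ≥0∞) (f : Zd d → ℂ) : ℝ≥0∞ :=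
  nestNorm p fun k => ENNReal.ofReal ‖f k‖

/-- The tensor norm `‖Θ‖_{ω,N} = sup_{j,k,ℓ} |Θ(j,k,ℓ)| ⟨|j−k|+|j−ℓ|⟩^{2N} /
(⟨|j|+|k|⟩^ω ⟨|j|+|ℓ|⟩^ω)`. -/
def tensorNorm {d : ℕ} (ω N : ℝ) (Θ : Zd d → Zd d → Zd d → ℂ) : ℝ≥0∞ :=
  ⨆ j, ⨆ k, ⨆ l, ENNReal.ofReal
    (‖Θ j k l‖ * jb (znorm (j - k) + znorm (j - l)) ^ (2 * N) /
      (jb (znorm j + znorm k) ^ ω * jb (znorm j + znorm l) ^ ω))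

/-- The tensor norm `‖Θ‖_{ω₁,ω₂,N}`. -/
def tensorNorm2 {d : ℕ} (ω₁ ω₂ N : ℝ) (Θ : Zd d → Zd d → Zd d → ℂ) : ℝ≥0∞ :=
  ⨆ j, ⨆ k, ⨆ l, ENNReal.ofReal
    (‖Θ j k l‖ * jb (znorm (j - k) + znorm (j - l)) ^ (2 * N) /
      (jb (znorm j + znorm k) ^ ω₁ * jb (znorm j + znorm l) ^ ω₂))

/-- The tensor norm `‖Θ‖_{0,0,ω,N} = sup_{j,k,ℓ} |Θ(j,k,ℓ)| ⟨|j−k|+|j−ℓ|⟩^{2N} /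
⟨|j|+|k|+|ℓ|⟩^ω`. -/
def tensorNorm00 {d : ℕ} (ω N : ℝ) (Θ : Zd d → Zd d → Zd d → ℂ) : ℝ≥0∞ :=
  ⨆ j, ⨆ k, ⨆ l, ENNReal.ofReal
    (‖Θ j k l‖ * jb (znorm (j - k) + znorm (j - l)) ^ (2 * N) /
      jb (znorm j + znorm k + znorm l) ^ ω)

/-- The first bilinear commutator `[𝒯_Θ, b]₁(f,g) = 𝒯_Θ(bf, g) − b·𝒯_Θ(f,g)`. -/
def comm1 {d : ℕ} (Θ : Zd d → Zd d → Zd d → ℂ) (b f g : Zd d → ℂ) : Zd d → ℂ :=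
  fun j => Tbil Θ (fun k => b k * f k) g j - b j * Tbil Θ f g j

/-- The second bilinear commutator `[𝒯_Θ, b]₂(f,g) = 𝒯_Θ(f, bg) − b·𝒯_Θ(f,g)`. -/
def comm2 {d : ℕ} (Θ : Zd d → Zd d → Zd d → ℂ) (b f g : Zd d → ℂ) : Zd d → ℂ :=
  fun j => Tbil Θ f (fun l => b l * g l) j - b j * Tbil Θ f g j

/-- One-step finite difference in the variables `(j,k)`, with shift `v ∈ ℤ^d`:
`(D2 v Θ)(j,k,ℓ) = Θ(j+v, k+v, ℓ) − Θ(j,k,ℓ)`. -/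
def D2 {d : ℕ} (v : Zd d) (Θ : Zd d → Zd d → Zd d → ℂ) : Zd d → Zd d → Zd d → ℂ :=
  fun j k l => Θ (j + v) (k + v) l - Θ j k l

/-- One-step finite difference in the variables `(j,ℓ)`, with shift `v ∈ ℤ^d`:
`(D3 v Θ)(j,k,ℓ) = Θ(j+v, k, ℓ+v) − Θ(j,k,ℓ)`. -/
def D3 {d : ℕ} (v : Zd d) (Θ : Zd d → Zd d → Zd d → ℂ) : Zd d → Zd d → Zd d → ℂ :=
  fun j k l => Θ (j + v) k (l + v) - Θ j k l

/-- The iterated partial finite difference operator `Δ₂^α` for `α ∈ ℤ^d`: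
in direction `m`, `Δ_{2,m}^t = (Δ₂^{m, sign t})^{|t|}`. -/
def Delta2 {d : ℕ} (α : Zd d) (Θ : Zd d → Zd d → Zd d → ℂ) : Zd d → Zd d → Zd d → ℂ :=
  (List.finRange d).foldr
    (fun m F => (D2 (Pi.single m (Int.sign (α m))))^[(α m).natAbs] ∘ F) id Θ

/-- The iterated partial finite difference operator `Δ₃^β` for `β ∈ ℤ^d`. -/
def Delta3 {d : ℕ} (β : Zd d) (Θ : Zd d → Zd d → Zd d → ℂ) : Zd d → Zd d → Zd d → ℂ :=
  (List.finRange d).foldr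
    (fun m F => (D3 (Pi.single m (Int.sign (β m))))^[(β m).natAbs] ∘ F) id Θ

/-- `|α| = Σ_m |α_m|` for `α ∈ ℤ^d`. -/
def l1norm {d : ℕ} (α : Zd d) : ℝ := ∑ m, |(α m : ℝ)|

/-- The bilinear tensor class `BT^{ω,N}(ℤ^d)`:
`|Δ₂^α Δ₃^β Θ(j,k,ℓ)| ≤ C_{N,α,β} ⟨|j|+|k|+|ℓ|⟩^{ω−|α|−|β|} ⟨|j−k|+|j−ℓ|⟩^{−2N}`. -/
def BT {d : ℕ} (ω : ℝ) (N : ℕ) (Θ : Zd d → Zd d → Zd d → ℂ) : Prop :=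
  ∀ α β : Zd d, ∃ C : ℝ, 0 < C ∧ ∀ j k l : Zd d,
    ‖Delta2 α (Delta3 β Θ) j k l‖ ≤
      C * jb (znorm j + znorm k + znorm l) ^ (ω - l1norm α - l1norm β) *
        jb (znorm (j - k) + znorm (j - l)) ^ (-(2 * (N : ℝ)))

/-- The bilinear tensor class of order zero, `BT^0(ℤ^d) = ∪_{N > d} BT^{0,N}(ℤ^d)`. -/
def BT0 {d : ℕ} (Θ : Zd d → Zd d → Zd d → ℂ) : Prop :=
  ∃ N : ℕ, d < N ∧ BT 0 N Θ

/-- Directional derivative of a function on `ℝ^d × ℝ^d` in the direction `v`. -/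
def pDeriv {d : ℕ} (v : (Fin d → ℝ) × (Fin d → ℝ))
    (F : (Fin d → ℝ) × (Fin d → ℝ) → ℂ) : (Fin d → ℝ) × (Fin d → ℝ) → ℂ :=
  fun p => fderiv ℝ F p v

/-- Iterated partial derivative `∂_x^α` in the first group of variables. -/
def pdx {d : ℕ} (α : Fin d → ℕ) :
    ((Fin d → ℝ) × (Fin d → ℝ) → ℂ) → (Fin d → ℝ) × (Fin d → ℝ) → ℂ :=
  (List.finRange d).foldr (fun m G => (pDeriv (Pi.single m 1, 0))^[α m] ∘ G) id

/-- Iterated partial derivative `∂_y^β` in the second group of variables. -/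
def pdy {d : ℕ} (β : Fin d → ℕ) :
    ((Fin d → ℝ) × (Fin d → ℝ) → ℂ) → (Fin d → ℝ) × (Fin d → ℝ) → ℂ :=
  (List.finRange d).foldr (fun m G => (pDeriv (0, Pi.single m 1))^[β m] ∘ G) id

section AuxBasics

lemma jb_pos (x : ℝ) : 0 < jb x := Real.sqrt_pos.2 (by positivity)

lemma jb_nonneg (x : ℝ) : 0 ≤ jb x := (jb_pos x).le

lemma one_le_jb (x : ℝ) : 1 ≤ jb x := by
  have : (1:ℝ) = Real.sqrt 1 := by simp
  rw [this]
  exact Real.sqrt_le_sqrt (by nlinarith [sq_nonneg x])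

lemma jb_mono {a b : ℝ} (ha : 0 ≤ a) (hab : a ≤ b) : jb a ≤ jb b :=
  Real.sqrt_le_sqrt (by nlinarith)

lemma le_jb {x : ℝ} (hx : 0 ≤ x) : x ≤ jb x := by
  have : x = Real.sqrt (x ^ 2) := by rw [Real.sqrt_sq hx]
  rw [this]; exact Real.sqrt_le_sqrt (by nlinarith [Real.sq_sqrt (by positivity : (0:ℝ) ≤ x^2)])

lemma jb_sq (x : ℝ) : jb x ^ 2 = 1 + x ^ 2 := Real.sq_sqrt (by positivity)

lemma znorm_nonneg {d : ℕ} (j : Zd d) : 0 ≤ znorm j := Real.sqrt_nonneg _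

lemma znorm_zero {d : ℕ} : znorm (0 : Zd d) = 0 := by simp [znorm]

lemma znorm_eq_norm {d : ℕ} (j : Zd d) :
    znorm j = ‖(WithLp.equiv 2 (Fin d → ℝ)).symm (fun i => (j i : ℝ))‖ := by
  rw [EuclideanSpace.norm_eq]
  simp [znorm, Real.norm_eq_abs, sq_abs]

lemma znorm_add_le {d : ℕ} (a b : Zd d) : znorm (a + b) ≤ znorm a + znorm b := by
  rw [znorm_eq_norm, znorm_eq_norm, znorm_eq_norm]
  have h : (WithLp.equiv 2 (Fin d → ℝ)).symm (fun i => (((a + b) i : ℤ) : ℝ)) =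
      (WithLp.equiv 2 (Fin d → ℝ)).symm (fun i => (a i : ℝ)) +
      (WithLp.equiv 2 (Fin d → ℝ)).symm (fun i => (b i : ℝ)) := by
    change WithLp.toLp 2 _ = WithLp.toLp 2 _ + WithLp.toLp 2 _
    rw [← WithLp.toLp_add]
    congr 1
    funext i
    push_cast
    simp
  rw [h]
  exact norm_add_le _ _

lemma znorm_le_sub_add {d : ℕ} (j k : Zd d) : znorm j ≤ znorm (j - k) + znorm k := by
  have := znorm_add_le (j - k) k
  simpa using this

lemma coord_abs_le_znorm {d : ℕ} (j : Zd d) (i : Fin d) : |(j i : ℝ)| ≤ znorm j := by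
  have h1 : ((j i : ℝ)) ^ 2 ≤ ∑ i', ((j i' : ℝ)) ^ 2 :=
    Finset.single_le_sum (f := fun i' => ((j i' : ℝ)) ^ 2) (fun i' _ => sq_nonneg _)
      (Finset.mem_univ i)
  calc |(j i : ℝ)| = Real.sqrt ((j i : ℝ) ^ 2) := (Real.sqrt_sq_eq_abs _).symm
    _ ≤ znorm j := Real.sqrt_le_sqrt h1

end AuxBasics
section AuxKernel
open ENNReal

/-- helper: antitone of rpow in base with negative exponent -/
lemma rpow_neg_anti {x y t : ℝ} (hx : 0 < x) (hxy : x ≤ y) (ht : 0 ≤ t) :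
    y ^ (-t) ≤ x ^ (-t) := by
  rw [Real.rpow_neg (by linarith), Real.rpow_neg hx.le]
  exact inv_anti₀ (Real.rpow_pos_of_pos hx t) (Real.rpow_le_rpow hx.le hxy ht)

/-- The basic kernel `m ↦ ⟨|m|⟩^{-s}`. -/
def Kk (d : ℕ) (s : ℝ) : Zd d → ℝ≥0∞ := fun m => ENNReal.ofReal (jb (znorm m) ^ (-s))

lemma Kk_mono {d : ℕ} {s s' : ℝ} (h : s ≤ s') (m : Zd d) : Kk d s' m ≤ Kk d s m := by
  apply ENNReal.ofReal_le_ofReal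
  exact Real.rpow_le_rpow_of_exponent_le (one_le_jb _) (by linarith)

lemma prod_jb_le {d : ℕ} (m : Zd d) : (∏ i, jb ((m i : ℝ))) ≤ jb (znorm m) ^ (d : ℕ) := by
  have hL : 0 ≤ ∏ i, jb ((m i : ℝ)) := Finset.prod_nonneg fun i _ => jb_nonneg _
  have hsq : (∏ i, jb ((m i : ℝ))) ^ 2 ≤ (jb (znorm m) ^ (d : ℕ)) ^ 2 := by
    rw [← Finset.prod_pow]
    have h1 : ∀ i ∈ Finset.univ, jb ((m i : ℝ)) ^ 2 ≤ 1 + ∑ i', ((m i' : ℝ)) ^ 2 := by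
      intro i _
      rw [jb_sq]
      have : ((m i : ℝ)) ^ 2 ≤ ∑ i', ((m i' : ℝ)) ^ 2 :=
        Finset.single_le_sum (f := fun i' => ((m i' : ℝ)) ^ 2) (fun i' _ => sq_nonneg _)
          (Finset.mem_univ i)
      linarith
    calc ∏ i, jb ((m i : ℝ)) ^ 2 ≤ ∏ _i : Fin d, (1 + ∑ i', ((m i' : ℝ)) ^ 2) :=
          Finset.prod_le_prod (fun i _ => by positivity) h1
      _ = (1 + ∑ i', ((m i' : ℝ)) ^ 2) ^ (d : ℕ) := by
          rw [Finset.prod_const, Finset.card_univ, Fintype.card_fin]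
      _ = (jb (znorm m) ^ 2) ^ (d : ℕ) := by
          rw [jb_sq]
          congr 1
          rw [znorm, Real.sq_sqrt (Finset.sum_nonneg fun i _ => sq_nonneg _)]
      _ = (jb (znorm m) ^ (d : ℕ)) ^ 2 := by ring
  have hR : 0 ≤ jb (znorm m) ^ (d : ℕ) := pow_nonneg (jb_nonneg _) _
  nlinarith

lemma jb_pow_le_prod {d : ℕ} (hd : 1 ≤ d) {s : ℝ} (hs : 0 ≤ s) (m : Zd d) :
    jb (znorm m) ^ (-s) ≤ ∏ i, jb ((m i : ℝ)) ^ (-(s / d)) := by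
  have hd0 : (0:ℝ) < d := by exact_mod_cast hd
  have key : (∏ i, jb ((m i : ℝ))) ^ (-(s / d)) ≤ jb (znorm m) ^ (-s) → False → True := fun _ _ => trivial
  have h1 : jb (znorm m) ^ (-s) = (jb (znorm m) ^ (d:ℕ)) ^ (-(s / d)) := by
    rw [← Real.rpow_natCast (jb (znorm m)) d, ← Real.rpow_mul (jb_nonneg _)]
    congr 1
    field_simp
  rw [h1]
  have h2 : (jb (znorm m) ^ (d:ℕ)) ^ (-(s / d)) ≤ (∏ i, jb ((m i : ℝ))) ^ (-(s / d)) := by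
    apply rpow_neg_anti (Finset.prod_pos fun i _ => jb_pos _) (prod_jb_le m) (by positivity)
  refine h2.trans ?_
  rw [← Real.finset_prod_rpow _ _ (fun i _ => jb_nonneg _)]

lemma tsum_pi_prod (n : ℕ) (a : ℤ → ℝ≥0∞) :
    ∑' m : (Fin n → ℤ), ∏ i, a (m i) = (∑' t : ℤ, a t) ^ n := by
  induction n with
  | zero =>
    simp only [Finset.univ_eq_empty, Finset.prod_empty, pow_zero]
    exact tsum_eq_single (fun i => i.elim0) (fun b hb => (hb (Subsingleton.elim b _)).elim)
  | succ n ih =>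
    rw [← (Fin.consEquiv (fun _ : Fin (n+1) => ℤ)).tsum_eq (fun m => ∏ i, a (m i))]
    rw [show (fun p : ℤ × (Fin n → ℤ) => ∏ i, a ((Fin.consEquiv (fun _ : Fin (n+1) => ℤ)) p i)) =
      (fun p : ℤ × (Fin n → ℤ) => a p.1 * ∏ i : Fin n, a (p.2 i)) from ?_]
    · rw [ENNReal.tsum_prod (f := fun x (y : Fin n → ℤ) => a x * ∏ i : Fin n, a (y i))]
      simp_rw [ENNReal.tsum_mul_left]
      rw [ih, ENNReal.tsum_mul_right, pow_succ]
      ring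
    · funext p
      rw [Fin.prod_univ_succ]
      simp [Fin.consEquiv]

lemma tsum_K_one_dim {u : ℝ} (hu : 1 < u) :
    (∑' t : ℤ, ENNReal.ofReal (jb ((t : ℝ)) ^ (-u))) ≠ ∞ := by
  set G : ℤ → ℝ := fun t => |(t:ℝ)| ^ (-u) + if t = 0 then 1 else 0 with hG
  have hGsum : Summable G := by
    apply Summable.add (Real.summable_abs_int_rpow hu)
    apply summable_of_ne_finset_zero (s := {0})
    intro t ht
    simp only [Finset.mem_singleton] at ht
    simp [ht]
  have hGnn : ∀ t, 0 ≤ G t := by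
    intro t
    have : (0:ℝ) ≤ |(t:ℝ)| ^ (-u) := Real.rpow_nonneg (abs_nonneg _) _
    by_cases h : t = 0 <;> simp [hG, h] <;> positivity
  have hle : ∀ t : ℤ, jb ((t:ℝ)) ^ (-u) ≤ G t := by
    intro t
    by_cases h : t = 0
    · subst h
      simp [hG, jb, Real.rpow_nonneg]
    · have ht0 : (0:ℝ) < |(t:ℝ)| := by
        simp only [abs_pos]
        exact_mod_cast h
      have habs : |(t:ℝ)| ≤ jb ((t:ℝ)) := by
        rw [← Real.sqrt_sq_eq_abs]
        exact Real.sqrt_le_sqrt (by nlinarith)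
      have h2 : jb ((t:ℝ)) ^ (-u) ≤ |(t:ℝ)| ^ (-u) :=
        rpow_neg_anti ht0 habs (by linarith)
      simp only [hG, h, if_false, add_zero]
      exact h2
  have hle2 : (∑' t : ℤ, ENNReal.ofReal (jb ((t : ℝ)) ^ (-u)))
      ≤ ENNReal.ofReal (∑' t, G t) := by
    rw [ENNReal.ofReal_tsum_of_nonneg hGnn hGsum]
    exact ENNReal.tsum_le_tsum fun t => ENNReal.ofReal_le_ofReal (hle t)
  exact ne_top_of_le_ne_top ENNReal.ofReal_ne_top hle2

lemma sumK_ne_top {d : ℕ} (hd : 1 ≤ d) {s : ℝ} (hs : (d:ℝ) < s) :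
    (∑' m : Zd d, Kk d s m) ≠ ∞ := by
  have hd0 : (0:ℝ) < d := by exact_mod_cast hd
  have hs0 : 0 ≤ s := by linarith
  have hu : 1 < s / d := by rw [lt_div_iff₀ hd0]; linarith
  have hle : ∀ m : Zd d, Kk d s m ≤ ∏ i, ENNReal.ofReal (jb ((m i : ℝ)) ^ (-(s/d))) := by
    intro m
    rw [← ENNReal.ofReal_prod_of_nonneg (fun i _ => Real.rpow_nonneg (jb_nonneg _) _)]
    exact ENNReal.ofReal_le_ofReal (jb_pow_le_prod hd hs0 m)
  have hle2 : (∑' m : Zd d, Kk d s m)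
      ≤ (∑' t : ℤ, ENNReal.ofReal (jb ((t : ℝ)) ^ (-(s/d)))) ^ d := by
    rw [← tsum_pi_prod d _]
    exact ENNReal.tsum_le_tsum hle
  exact ne_top_of_le_ne_top (ENNReal.pow_ne_top (tsum_K_one_dim hu)) hle2

lemma sumK_ne_zero {d : ℕ} (s : ℝ) : (∑' m : Zd d, Kk d s m) ≠ 0 := by
  intro h
  have h0 : Kk d s 0 ≤ ∑' m : Zd d, Kk d s m := ENNReal.le_tsum 0
  rw [h] at h0
  simp only [le_zero_iff] at h0
  have : Kk d s 0 = 1 := by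
    simp [Kk, znorm_zero, jb, Real.one_rpow]
  rw [this] at h0
  exact one_ne_zero h0

end AuxKernel
section AuxHolder
open ENNReal

lemma tsum_inner_le_weight_mul_Lp' {ι : Type*} {P : ℝ} (hP : 1 ≤ P) (w f : ι → ℝ≥0∞) :
    ∑' i, w i * f i ≤ (∑' i, w i) ^ (1 - P⁻¹) * (∑' i, w i * f i ^ P) ^ P⁻¹ := by
  have hP0 : (0:ℝ) < P := lt_of_lt_of_le one_pos hP
  have h1 : (0:ℝ) ≤ 1 - P⁻¹ := by
    have : P⁻¹ ≤ 1 := by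
      rw [inv_le_one_iff₀]
      right; exact hP
    linarith
  rw [ENNReal.tsum_eq_iSup_sum]
  apply iSup_le
  intro s
  refine (ENNReal.inner_le_weight_mul_Lp_of_nonneg s hP w f).trans ?_
  exact mul_le_mul' (ENNReal.rpow_le_rpow (ENNReal.sum_le_tsum s) h1)
    (ENNReal.rpow_le_rpow (ENNReal.sum_le_tsum s) (by positivity))

lemma tsum_inner_le_Lp_mul_Lq' {ι : Type*} (f g : ι → ℝ≥0∞) {s t : ℝ}
    (hst : s.HolderConjugate t) :
    ∑' i, f i * g i ≤ (∑' i, f i ^ s) ^ (1/s) * (∑' i, g i ^ t) ^ (1/t) := by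
  rw [ENNReal.tsum_eq_iSup_sum]
  apply iSup_le
  intro u
  refine (ENNReal.inner_le_Lp_mul_Lq u f g hst).trans ?_
  exact mul_le_mul'
    (ENNReal.rpow_le_rpow (ENNReal.sum_le_tsum u) (le_of_lt (one_div_pos.mpr hst.pos)))
    (ENNReal.rpow_le_rpow (ENNReal.sum_le_tsum u) (le_of_lt (one_div_pos.mpr hst.symm.pos)))

lemma conv_bound {d : ℕ} (κ F : Zd d → ℝ≥0∞) {P : ℝ} (hP : 1 ≤ P)
    (hS0 : (∑' m, κ m) ≠ 0) (hS : (∑' m, κ m) ≠ ∞) :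
    ∑' j : Zd d, (∑' k, κ (j - k) * F k) ^ P ≤ (∑' m, κ m) ^ P * ∑' k, F k ^ P := by
  set S := ∑' m, κ m with hSdef
  have hP0 : (0:ℝ) < P := lt_of_lt_of_le one_pos hP
  have htrans : ∀ j : Zd d, (∑' k, κ (j - k)) = S := fun j => (Equiv.subLeft j).tsum_eq κ
  have htrans' : ∀ k : Zd d, (∑' j, κ (j - k)) = S := fun k => (Equiv.subRight k).tsum_eq κ
  have step1 : ∀ j : Zd d, (∑' k, κ (j - k) * F k) ^ P ≤
      S ^ (P - 1) * ∑' k, κ (j - k) * F k ^ P := by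
    intro j
    have h := tsum_inner_le_weight_mul_Lp' hP (fun k => κ (j - k)) F
    rw [htrans j] at h
    calc (∑' k, κ (j - k) * F k) ^ P
        ≤ (S ^ (1 - P⁻¹) * (∑' k, κ (j - k) * F k ^ P) ^ P⁻¹) ^ P :=
          ENNReal.rpow_le_rpow h hP0.le
      _ = S ^ (P - 1) * ∑' k, κ (j - k) * F k ^ P := by
          rw [ENNReal.mul_rpow_of_nonneg _ _ hP0.le, ← ENNReal.rpow_mul, ← ENNReal.rpow_mul,
            sub_mul, one_mul, inv_mul_cancel₀ hP0.ne', ENNReal.rpow_one]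
  calc ∑' j : Zd d, (∑' k, κ (j - k) * F k) ^ P
      ≤ ∑' j : Zd d, S ^ (P - 1) * ∑' k, κ (j - k) * F k ^ P := ENNReal.tsum_le_tsum step1
    _ = S ^ (P - 1) * ∑' j : Zd d, ∑' k, κ (j - k) * F k ^ P := ENNReal.tsum_mul_left
    _ = S ^ (P - 1) * ∑' k : Zd d, ∑' j, κ (j - k) * F k ^ P := by rw [ENNReal.tsum_comm]
    _ = S ^ (P - 1) * ∑' k : Zd d, S * F k ^ P := by
        congr 1
        apply tsum_congr
        intro k
        rw [ENNReal.tsum_mul_right, htrans' k]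
    _ = (S ^ (P - 1) * S) * ∑' k, F k ^ P := by rw [ENNReal.tsum_mul_left, ← mul_assoc]
    _ = S ^ P * ∑' k, F k ^ P := by
        congr 1
        calc S ^ (P - 1) * S = S ^ (P - 1) * S ^ (1:ℝ) := by rw [ENNReal.rpow_one]
          _ = S ^ (P - 1 + 1) := (ENNReal.rpow_add _ _ hS0 hS).symm
          _ = S ^ P := by norm_num

lemma nest_le_one_finite {ι : Type*} {p : ℝ≥0∞} (hp : 1 ≤ p) (hp' : p ≠ ∞) {F : ι → ℝ≥0∞}
    (hF : nestNorm p F ≤ 1) : ∑' i, F i ^ p.toReal ≤ 1 := by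
  have hP1 : (1:ℝ) ≤ p.toReal := by
    have := ENNReal.toReal_mono hp' hp
    simpa using this
  have hP0 : (0:ℝ) < p.toReal := lt_of_lt_of_le one_pos hP1
  rw [nestNorm, if_neg hp'] at hF
  have h2 := ENNReal.rpow_le_rpow hF hP0.le
  rwa [← ENNReal.rpow_mul, one_div, inv_mul_cancel₀ hP0.ne', ENNReal.rpow_one,
    ENNReal.one_rpow] at h2

lemma master {d : ℕ} (K : Zd d → ℝ≥0∞) (hS0 : (∑' m, K m) ≠ 0) (hS : (∑' m, K m) ≠ ∞)
    (W V : Zd d → Zd d → ℝ≥0∞) (c1 c2 : ℝ≥0∞)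
    (hW : ∀ j k, W j k ≤ c1 * K (j - k)) (hV : ∀ j l, V j l ≤ c2 * K (j - l))
    (F G : Zd d → ℝ≥0∞)
    {p q r : ℝ≥0∞} (hp : 1 ≤ p) (hq : 1 ≤ q) (hr : 1 ≤ r) (hr' : r ≠ ∞)
    (hpqr : p⁻¹ + q⁻¹ = r⁻¹)
    (hF : nestNorm p F ≤ 1) (hG : nestNorm q G ≤ 1) :
    ∑' j : Zd d, ((∑' k, W j k * F k) * (∑' l, V j l * G l)) ^ r.toReal
      ≤ (c1 * c2 * ((∑' m, K m) * (∑' m, K m))) ^ r.toReal := by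
  set S := ∑' m, K m with hSdef
  set R := r.toReal with hRdef
  have hR1 : (1:ℝ) ≤ R := by
    have := ENNReal.toReal_mono hr' hr
    simpa using this
  have hR0 : (0:ℝ) < R := lt_of_lt_of_le one_pos hR1
  set cF : Zd d → ℝ≥0∞ := fun j => ∑' k, K (j - k) * F k with hcF
  set cG : Zd d → ℝ≥0∞ := fun j => ∑' l, K (j - l) * G l with hcG
  have hu : ∀ j, (∑' k, W j k * F k) ≤ c1 * cF j := by
    intro j
    rw [hcF, ← ENNReal.tsum_mul_left]
    exact ENNReal.tsum_le_tsum fun k => by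
      rw [← mul_assoc]; exact mul_le_mul_left (hW j k) (F k)
  have hv : ∀ j, (∑' l, V j l * G l) ≤ c2 * cG j := by
    intro j
    rw [hcG, ← ENNReal.tsum_mul_left]
    exact ENNReal.tsum_le_tsum fun l => by
      rw [← mul_assoc]; exact mul_le_mul_left (hV j l) (G l)
  suffices hmain : ∑' j : Zd d, (cF j * cG j) ^ R ≤ (S * S) ^ R by
    calc ∑' j : Zd d, ((∑' k, W j k * F k) * (∑' l, V j l * G l)) ^ R
        ≤ ∑' j : Zd d, ((c1 * c2) * (cF j * cG j)) ^ R := by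
          apply ENNReal.tsum_le_tsum
          intro j
          apply ENNReal.rpow_le_rpow _ hR0.le
          calc (∑' k, W j k * F k) * (∑' l, V j l * G l)
              ≤ (c1 * cF j) * (c2 * cG j) := mul_le_mul' (hu j) (hv j)
            _ = (c1 * c2) * (cF j * cG j) := by ring
      _ = (c1 * c2) ^ R * ∑' j : Zd d, (cF j * cG j) ^ R := by
          simp_rw [ENNReal.mul_rpow_of_nonneg _ _ hR0.le]
          rw [ENNReal.tsum_mul_left]
      _ ≤ (c1 * c2) ^ R * (S * S) ^ R := mul_le_mul_right hmain _
      _ = (c1 * c2 * (S * S)) ^ R := (ENNReal.mul_rpow_of_nonneg _ _ hR0.le).symm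
  -- main case analysis
  by_cases hpinf : p = ∞
  · -- q = r
    have hqr : q = r := by
      have h0 : p⁻¹ = 0 := by rw [hpinf]; simp
      rw [h0, zero_add] at hpqr
      rw [← inv_inv q, ← inv_inv r, hpqr]
    have hFle : ∀ k, F k ≤ 1 := by
      intro k
      rw [nestNorm, if_pos hpinf] at hF
      exact (le_iSup F k).trans hF
    have hcFle : ∀ j, cF j ≤ S := by
      intro j
      rw [hcF]
      calc ∑' k, K (j - k) * F k ≤ ∑' k, K (j - k) * 1 :=
            ENNReal.tsum_le_tsum fun k => mul_le_mul_right (hFle k) _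
        _ = ∑' k, K (j - k) := by simp
        _ = S := (Equiv.subLeft j).tsum_eq K
    have hGsum : ∑' l, G l ^ R ≤ 1 := by
      rw [hRdef, ← hqr]
      exact nest_le_one_finite hq (hqr ▸ hr') hG
    calc ∑' j : Zd d, (cF j * cG j) ^ R
        ≤ ∑' j : Zd d, (S * cG j) ^ R := by
          apply ENNReal.tsum_le_tsum
          intro j
          exact ENNReal.rpow_le_rpow (mul_le_mul_left (hcFle j) _) hR0.le
      _ = S ^ R * ∑' j : Zd d, cG j ^ R := by
          simp_rw [ENNReal.mul_rpow_of_nonneg _ _ hR0.le]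
          rw [ENNReal.tsum_mul_left]
      _ ≤ S ^ R * (S ^ R * ∑' l, G l ^ R) :=
          mul_le_mul_right (conv_bound K G hR1 hS0 hS) _
      _ ≤ S ^ R * (S ^ R * 1) := by gcongr
      _ = (S * S) ^ R := by
          rw [mul_one, ENNReal.mul_rpow_of_nonneg _ _ hR0.le]
  by_cases hqinf : q = ∞
  · -- p = r
    have hpr : p = r := by
      have h0 : q⁻¹ = 0 := by rw [hqinf]; simp
      rw [h0, add_zero] at hpqr
      rw [← inv_inv p, ← inv_inv r, hpqr]
    have hGle : ∀ l, G l ≤ 1 := by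
      intro l
      rw [nestNorm, if_pos hqinf] at hG
      exact (le_iSup G l).trans hG
    have hcGle : ∀ j, cG j ≤ S := by
      intro j
      rw [hcG]
      calc ∑' l, K (j - l) * G l ≤ ∑' l, K (j - l) * 1 :=
            ENNReal.tsum_le_tsum fun l => mul_le_mul_right (hGle l) _
        _ = ∑' l, K (j - l) := by simp
        _ = S := (Equiv.subLeft j).tsum_eq K
    have hFsum : ∑' k, F k ^ R ≤ 1 := by
      rw [hRdef, ← hpr]
      exact nest_le_one_finite hp (hpr ▸ hr') hF
    calc ∑' j : Zd d, (cF j * cG j) ^ R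
        ≤ ∑' j : Zd d, (cF j * S) ^ R := by
          apply ENNReal.tsum_le_tsum
          intro j
          exact ENNReal.rpow_le_rpow (mul_le_mul_right (hcGle j) _) hR0.le
      _ = S ^ R * ∑' j : Zd d, cF j ^ R := by
          simp_rw [mul_comm, ENNReal.mul_rpow_of_nonneg _ _ hR0.le]
          rw [ENNReal.tsum_mul_left]
      _ ≤ S ^ R * (S ^ R * ∑' k, F k ^ R) :=
          mul_le_mul_right (conv_bound K F hR1 hS0 hS) _
      _ ≤ S ^ R * (S ^ R * 1) := by gcongr
      _ = (S * S) ^ R := by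
          rw [mul_one, ENNReal.mul_rpow_of_nonneg _ _ hR0.le]
  · -- both finite
    set P := p.toReal with hPdef
    set Q := q.toReal with hQdef
    have hP1 : (1:ℝ) ≤ P := by
      have := ENNReal.toReal_mono hpinf hp; simpa using this
    have hQ1 : (1:ℝ) ≤ Q := by
      have := ENNReal.toReal_mono hqinf hq; simpa using this
    have hP0 : (0:ℝ) < P := lt_of_lt_of_le one_pos hP1
    have hQ0 : (0:ℝ) < Q := lt_of_lt_of_le one_pos hQ1
    have hreal : P⁻¹ + Q⁻¹ = R⁻¹ := by
      have := congrArg ENNReal.toReal hpqr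
      rwa [ENNReal.toReal_add (ENNReal.inv_ne_top.2 (zero_lt_one.trans_le hp).ne')
        (ENNReal.inv_ne_top.2 (zero_lt_one.trans_le hq).ne'), ENNReal.toReal_inv,
        ENNReal.toReal_inv, ENNReal.toReal_inv] at this
    have hRP : R < P := by
      have h1 : P⁻¹ < R⁻¹ := by
        have : (0:ℝ) < Q⁻¹ := by positivity
        linarith
      exact (inv_lt_inv₀ hP0 hR0).mp h1
    have hst : Real.HolderConjugate (P / R) (Q / R) := by
      rw [Real.holderConjugate_iff]
      constructor
      · rw [lt_div_iff₀ hR0]; linarith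
      · rw [inv_div, inv_div, div_add_div _ _ hP0.ne' hQ0.ne',
          div_eq_one_iff_eq (by positivity)]
        field_simp [hP0.ne', hQ0.ne', hR0.ne'] at hreal
        nlinarith [hreal]
    have hFsum : ∑' k, F k ^ P ≤ 1 := nest_le_one_finite hp hpinf hF
    have hGsum : ∑' l, G l ^ Q ≤ 1 := nest_le_one_finite hq hqinf hG
    calc ∑' j : Zd d, (cF j * cG j) ^ R
        = ∑' j : Zd d, (cF j ^ R) * (cG j ^ R) := by
          simp_rw [ENNReal.mul_rpow_of_nonneg _ _ hR0.le]
      _ ≤ (∑' j : Zd d, (cF j ^ R) ^ (P / R)) ^ (1 / (P / R)) *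
          (∑' j : Zd d, (cG j ^ R) ^ (Q / R)) ^ (1 / (Q / R)) :=
          tsum_inner_le_Lp_mul_Lq' _ _ hst
      _ = (∑' j : Zd d, cF j ^ P) ^ (R / P) * (∑' j : Zd d, cG j ^ Q) ^ (R / Q) := by
          rw [one_div_div, one_div_div]
          congr 2
          · apply tsum_congr; intro j
            rw [← ENNReal.rpow_mul]
            congr 1
            field_simp
          · apply tsum_congr; intro j
            rw [← ENNReal.rpow_mul]
            congr 1
            field_simp
      _ ≤ (S ^ P * ∑' k, F k ^ P) ^ (R / P) * (S ^ Q * ∑' l, G l ^ Q) ^ (R / Q) := by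
          gcongr
          · exact conv_bound K F hP1 hS0 hS
          · exact conv_bound K G hQ1 hS0 hS
      _ ≤ (S ^ P * 1) ^ (R / P) * (S ^ Q * 1) ^ (R / Q) := by gcongr
      _ = (S * S) ^ R := by
          rw [mul_one, mul_one, ← ENNReal.rpow_mul, ← ENNReal.rpow_mul]
          rw [show P * (R / P) = R by field_simp, show Q * (R / Q) = R by field_simp]
          rw [ENNReal.mul_rpow_of_nonneg _ _ hR0.le]

end AuxHolder
section AuxPointwise
open ENNReal

lemma ofReal_norm_tsum_le {ι : Type*} [Countable ι] (a : ι → ℂ) :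
    ENNReal.ofReal ‖∑' i, a i‖ ≤ ∑' i, ENNReal.ofReal ‖a i‖ := by
  by_cases hn : Summable fun i => ‖a i‖
  · calc ENNReal.ofReal ‖∑' i, a i‖ ≤ ENNReal.ofReal (∑' i, ‖a i‖) :=
        ENNReal.ofReal_le_ofReal (norm_tsum_le_tsum_norm hn)
      _ = ∑' i, ENNReal.ofReal ‖a i‖ :=
        ENNReal.ofReal_tsum_of_nonneg (fun i => norm_nonneg _) hn
  · have htop : (∑' i, ENNReal.ofReal ‖a i‖) = ∞ := by
      by_contra h
      apply hn
      have h2 : (∑' i, ((‖a i‖₊ : ℝ≥0) : ℝ≥0∞)) ≠ ∞ := by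
        simpa only [← ENNReal.ofReal_coe_nnreal, coe_nnnorm] using h
      have := ENNReal.tsum_coe_ne_top_iff_summable.mp h2
      exact NNReal.summable_coe.mpr this
    rw [htop]
    exact le_top

/-- Extraction of the pointwise kernel bound from the hypothesis on `Θ`. -/
lemma kernel_bound {d : ℕ} {N : ℝ} (hN : 0 ≤ N) (Θ : Zd d → Zd d → Zd d → ℂ)
    (hΘ : (⨆ j : Zd d, ⨆ k : Zd d, ⨆ l : Zd d,
      ENNReal.ofReal (‖Θ j k l‖ * jb (znorm (j - k) + znorm (j - l)) ^ (2 * N))) ≠ ∞) :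
    ∃ C : ℝ, 0 ≤ C ∧ ∀ j k l : Zd d,
      ‖Θ j k l‖ ≤ C * jb (znorm (j - k)) ^ (-N) * jb (znorm (j - l)) ^ (-N) := by
  set T := (⨆ j : Zd d, ⨆ k : Zd d, ⨆ l : Zd d,
      ENNReal.ofReal (‖Θ j k l‖ * jb (znorm (j - k) + znorm (j - l)) ^ (2 * N))) with hT
  refine ⟨T.toReal, ENNReal.toReal_nonneg, ?_⟩
  intro j k l
  have hle : ENNReal.ofReal (‖Θ j k l‖ * jb (znorm (j - k) + znorm (j - l)) ^ (2 * N)) ≤ T := by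
    rw [hT]
    exact le_iSup_of_le j (le_iSup_of_le k (le_iSup_of_le l (le_refl _)))
  have hre : ‖Θ j k l‖ * jb (znorm (j - k) + znorm (j - l)) ^ (2 * N) ≤ T.toReal :=
    (ENNReal.ofReal_le_iff_le_toReal hΘ).mp hle
  set a := znorm (j - k) with ha
  set bb := znorm (j - l) with hb
  have ha0 : 0 ≤ a := znorm_nonneg _
  have hb0 : 0 ≤ bb := znorm_nonneg _
  have hprod : jb a ^ N * jb bb ^ N ≤ jb (a + bb) ^ (2 * N) := by
    have h2 : jb (a + bb) ^ (2 * N) = jb (a + bb) ^ N * jb (a + bb) ^ N := by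
      rw [← Real.rpow_add (jb_pos _)]
      ring_nf
    rw [h2]
    apply mul_le_mul
    · exact Real.rpow_le_rpow (jb_nonneg _) (jb_mono ha0 (by linarith)) hN
    · exact Real.rpow_le_rpow (jb_nonneg _) (jb_mono hb0 (by linarith)) hN
    · exact Real.rpow_nonneg (jb_nonneg _) _
    · exact Real.rpow_nonneg (jb_nonneg _) _
  have hpos : 0 < jb a ^ N * jb bb ^ N :=
    mul_pos (Real.rpow_pos_of_pos (jb_pos _) _) (Real.rpow_pos_of_pos (jb_pos _) _)
  have hmain : ‖Θ j k l‖ * (jb a ^ N * jb bb ^ N) ≤ T.toReal := by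
    calc ‖Θ j k l‖ * (jb a ^ N * jb bb ^ N)
        ≤ ‖Θ j k l‖ * jb (a + bb) ^ (2 * N) :=
          mul_le_mul_of_nonneg_left hprod (norm_nonneg _)
      _ ≤ T.toReal := hre
  rw [Real.rpow_neg (jb_nonneg _), Real.rpow_neg (jb_nonneg _)]
  rw [mul_assoc, ← mul_inv]
  rw [← le_div_iff₀ hpos] at hmain
  calc ‖Θ j k l‖ ≤ T.toReal / (jb a ^ N * jb bb ^ N) := hmain
    _ = T.toReal * (jb a ^ N * jb bb ^ N)⁻¹ := by rw [div_eq_mul_inv]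

/-- boundedness of a `c₀` sequence -/
lemma c0_bounded {d : ℕ} (b : Zd d → ℂ)
    (hb : ∀ ε : ℝ, 0 < ε → ∃ R : ℝ, ∀ k : Zd d, R < znorm k → ‖b k‖ < ε) :
    ∃ B : ℝ, 0 ≤ B ∧ ∀ k, ‖b k‖ ≤ B := by
  obtain ⟨R, hR⟩ := hb 1 one_pos
  have hfin : {k : Zd d | znorm k ≤ R}.Finite := by
    classical
    apply Set.Finite.subset (Set.finite_Icc (fun _ => (-⌈R⌉ : ℤ)) (fun _ => ⌈R⌉))
    intro k hk
    simp only [Set.mem_setOf_eq] at hk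
    simp only [Set.mem_Icc, Pi.le_def]
    constructor <;> intro i
    · have h1 : |(k i : ℝ)| ≤ R := le_trans (coord_abs_le_znorm k i) hk
      have h2 := Int.le_ceil R
      have : -(⌈R⌉ : ℝ) ≤ (k i : ℝ) := by
        cases' abs_le.mp h1 with hl hr
        linarith
      exact_mod_cast this
    · have h1 : |(k i : ℝ)| ≤ R := le_trans (coord_abs_le_znorm k i) hk
      have h2 := Int.le_ceil R
      have : (k i : ℝ) ≤ (⌈R⌉ : ℝ) := by
        cases' abs_le.mp h1 with hl hr
        linarith
      exact_mod_cast this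
  classical
  refine ⟨1 + ∑ k ∈ hfin.toFinset, ‖b k‖, by positivity, ?_⟩
  intro k
  by_cases hk : znorm k ≤ R
  · have hmem : k ∈ hfin.toFinset := by
      rw [Set.Finite.mem_toFinset]; exact hk
    have : ‖b k‖ ≤ ∑ k' ∈ hfin.toFinset, ‖b k'‖ :=
      Finset.single_le_sum (f := fun k' => ‖b k'‖) (fun _ _ => norm_nonneg _) hmem
    linarith
  · have : ‖b k‖ < 1 := hR k (not_le.mp hk)
    have hs : 0 ≤ ∑ k' ∈ hfin.toFinset, ‖b k'‖ :=
      Finset.sum_nonneg fun _ _ => norm_nonneg _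
    linarith

end AuxPointwise
section AuxComm
open ENNReal

lemma tbil_bound {d : ℕ} (Θ : Zd d → Zd d → Zd d → ℂ) (h g : Zd d → ℂ) (j : Zd d) :
    ENNReal.ofReal ‖Tbil Θ h g j‖ ≤
      ∑' k, ∑' l, ENNReal.ofReal ‖Θ j k l‖ * ENNReal.ofReal ‖h k‖ * ENNReal.ofReal ‖g l‖ := by
  refine (ofReal_norm_tsum_le _).trans ?_
  apply ENNReal.tsum_le_tsum
  intro k
  refine (ofReal_norm_tsum_le _).trans ?_
  apply ENNReal.tsum_le_tsum
  intro l
  rw [norm_mul, norm_mul, ENNReal.ofReal_mul (by positivity), ENNReal.ofReal_mul (norm_nonneg _)]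

lemma pointwise_comm1 {d : ℕ} {N N' C : ℝ} (hC : 0 ≤ C) (hNN' : N' ≤ N)
    (Θ : Zd d → Zd d → Zd d → ℂ)
    (hker : ∀ j k l, ‖Θ j k l‖ ≤ C * jb (znorm (j - k)) ^ (-N) * jb (znorm (j - l)) ^ (-N))
    (b f g : Zd d → ℂ) (j : Zd d) :
    ENNReal.ofReal ‖comm1 Θ b f g j‖ ≤
      (∑' k, (ENNReal.ofReal C * (ENNReal.ofReal ‖b k‖ + ENNReal.ofReal ‖b j‖) * Kk d N (j - k))
        * ENNReal.ofReal ‖f k‖) *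
      (∑' l, Kk d N' (j - l) * ENNReal.ofReal ‖g l‖) := by
  set Fk : Zd d → ℝ≥0∞ := fun k => ENNReal.ofReal ‖f k‖ with hFk
  set Gl : Zd d → ℝ≥0∞ := fun l => ENNReal.ofReal ‖g l‖ with hGl
  set Bk : Zd d → ℝ≥0∞ := fun k => ENNReal.ofReal ‖b k‖ with hBk
  have hstep1 : ENNReal.ofReal ‖comm1 Θ b f g j‖ ≤
      ∑' k, ∑' l, ENNReal.ofReal ‖Θ j k l‖ * (Bk k + Bk j) * Fk k * Gl l := by
    have hA := tbil_bound Θ (fun k => b k * f k) g j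
    have hB := tbil_bound Θ f g j
    calc ENNReal.ofReal ‖comm1 Θ b f g j‖
        ≤ ENNReal.ofReal (‖Tbil Θ (fun k => b k * f k) g j‖ + ‖b j * Tbil Θ f g j‖) :=
          ENNReal.ofReal_le_ofReal (norm_sub_le _ _)
      _ = ENNReal.ofReal ‖Tbil Θ (fun k => b k * f k) g j‖ +
          Bk j * ENNReal.ofReal ‖Tbil Θ f g j‖ := by
          rw [ENNReal.ofReal_add (norm_nonneg _) (norm_nonneg _), norm_mul,
            ENNReal.ofReal_mul (norm_nonneg _)]
      _ ≤ (∑' k, ∑' l, ENNReal.ofReal ‖Θ j k l‖ * (Bk k * Fk k) * Gl l) +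
          Bk j * ∑' k, ∑' l, ENNReal.ofReal ‖Θ j k l‖ * Fk k * Gl l := by
          apply add_le_add
          · refine hA.trans (le_of_eq ?_)
            apply tsum_congr; intro k
            apply tsum_congr; intro l
            rw [norm_mul, ENNReal.ofReal_mul (norm_nonneg _)]
          · exact mul_le_mul_right hB _
      _ = (∑' k, ∑' l, ENNReal.ofReal ‖Θ j k l‖ * (Bk k * Fk k) * Gl l) +
          (∑' k, ∑' l, Bk j * (ENNReal.ofReal ‖Θ j k l‖ * Fk k * Gl l)) := by
          rw [← ENNReal.tsum_mul_left]
          congr 1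
          apply tsum_congr; intro k
          rw [← ENNReal.tsum_mul_left]
      _ = ∑' k, ∑' l, (ENNReal.ofReal ‖Θ j k l‖ * (Bk k * Fk k) * Gl l +
          Bk j * (ENNReal.ofReal ‖Θ j k l‖ * Fk k * Gl l)) := by
          rw [← ENNReal.tsum_add]
          apply tsum_congr; intro k
          rw [← ENNReal.tsum_add]
      _ = ∑' k, ∑' l, ENNReal.ofReal ‖Θ j k l‖ * (Bk k + Bk j) * Fk k * Gl l := by
          apply tsum_congr; intro k
          apply tsum_congr; intro l
          ring
  refine hstep1.trans ?_
  have hstep2 : ∀ k l : Zd d,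
      ENNReal.ofReal ‖Θ j k l‖ * (Bk k + Bk j) * Fk k * Gl l ≤
      ((ENNReal.ofReal C * (Bk k + Bk j) * Kk d N (j - k)) * Fk k) * (Kk d N' (j - l) * Gl l) := by
    intro k l
    have hT : ENNReal.ofReal ‖Θ j k l‖ ≤
        ENNReal.ofReal C * Kk d N (j - k) * Kk d N' (j - l) := by
      calc ENNReal.ofReal ‖Θ j k l‖
          ≤ ENNReal.ofReal (C * jb (znorm (j - k)) ^ (-N) * jb (znorm (j - l)) ^ (-N)) :=
            ENNReal.ofReal_le_ofReal (hker j k l)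
        _ = ENNReal.ofReal C * Kk d N (j - k) * Kk d N (j - l) := by
            rw [ENNReal.ofReal_mul (mul_nonneg hC (Real.rpow_nonneg (jb_nonneg _) _)),
              ENNReal.ofReal_mul hC]
            rfl
        _ ≤ ENNReal.ofReal C * Kk d N (j - k) * Kk d N' (j - l) :=
            mul_le_mul_right (Kk_mono hNN' _) _
    calc ENNReal.ofReal ‖Θ j k l‖ * (Bk k + Bk j) * Fk k * Gl l
        ≤ (ENNReal.ofReal C * Kk d N (j - k) * Kk d N' (j - l)) * (Bk k + Bk j) * Fk k * Gl l := by
          exact mul_le_mul_left (mul_le_mul_left (mul_le_mul_left hT _) _) _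
      _ = ((ENNReal.ofReal C * (Bk k + Bk j) * Kk d N (j - k)) * Fk k) *
          (Kk d N' (j - l) * Gl l) := by ring
  calc ∑' k, ∑' l, ENNReal.ofReal ‖Θ j k l‖ * (Bk k + Bk j) * Fk k * Gl l
      ≤ ∑' k, ∑' l, ((ENNReal.ofReal C * (Bk k + Bk j) * Kk d N (j - k)) * Fk k) *
          (Kk d N' (j - l) * Gl l) :=
        ENNReal.tsum_le_tsum fun k => ENNReal.tsum_le_tsum fun l => hstep2 k l
    _ = (∑' k, (ENNReal.ofReal C * (Bk k + Bk j) * Kk d N (j - k)) * Fk k) *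
        (∑' l, Kk d N' (j - l) * Gl l) := by
        simp_rw [ENNReal.tsum_mul_left]
        rw [ENNReal.tsum_mul_right]

lemma pointwise_comm2 {d : ℕ} {N N' C : ℝ} (hC : 0 ≤ C) (hNN' : N' ≤ N)
    (Θ : Zd d → Zd d → Zd d → ℂ)
    (hker : ∀ j k l, ‖Θ j k l‖ ≤ C * jb (znorm (j - k)) ^ (-N) * jb (znorm (j - l)) ^ (-N))
    (b f g : Zd d → ℂ) (j : Zd d) :
    ENNReal.ofReal ‖comm2 Θ b f g j‖ ≤
      (∑' k, Kk d N' (j - k) * ENNReal.ofReal ‖f k‖) *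
      (∑' l, (ENNReal.ofReal C * (ENNReal.ofReal ‖b l‖ + ENNReal.ofReal ‖b j‖) * Kk d N (j - l))
        * ENNReal.ofReal ‖g l‖) := by
  set Fk : Zd d → ℝ≥0∞ := fun k => ENNReal.ofReal ‖f k‖ with hFk
  set Gl : Zd d → ℝ≥0∞ := fun l => ENNReal.ofReal ‖g l‖ with hGl
  set Bk : Zd d → ℝ≥0∞ := fun k => ENNReal.ofReal ‖b k‖ with hBk
  have hstep1 : ENNReal.ofReal ‖comm2 Θ b f g j‖ ≤
      ∑' k, ∑' l, ENNReal.ofReal ‖Θ j k l‖ * (Bk l + Bk j) * Fk k * Gl l := by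
    have hA := tbil_bound Θ f (fun l => b l * g l) j
    have hB := tbil_bound Θ f g j
    calc ENNReal.ofReal ‖comm2 Θ b f g j‖
        ≤ ENNReal.ofReal (‖Tbil Θ f (fun l => b l * g l) j‖ + ‖b j * Tbil Θ f g j‖) :=
          ENNReal.ofReal_le_ofReal (norm_sub_le _ _)
      _ = ENNReal.ofReal ‖Tbil Θ f (fun l => b l * g l) j‖ +
          Bk j * ENNReal.ofReal ‖Tbil Θ f g j‖ := by
          rw [ENNReal.ofReal_add (norm_nonneg _) (norm_nonneg _), norm_mul,
            ENNReal.ofReal_mul (norm_nonneg _)]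
      _ ≤ (∑' k, ∑' l, ENNReal.ofReal ‖Θ j k l‖ * Fk k * (Bk l * Gl l)) +
          Bk j * ∑' k, ∑' l, ENNReal.ofReal ‖Θ j k l‖ * Fk k * Gl l := by
          apply add_le_add
          · refine hA.trans (le_of_eq ?_)
            apply tsum_congr; intro k
            apply tsum_congr; intro l
            rw [norm_mul, ENNReal.ofReal_mul (norm_nonneg _)]
          · exact mul_le_mul_right hB _
      _ = (∑' k, ∑' l, ENNReal.ofReal ‖Θ j k l‖ * Fk k * (Bk l * Gl l)) +
          (∑' k, ∑' l, Bk j * (ENNReal.ofReal ‖Θ j k l‖ * Fk k * Gl l)) := by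
          rw [← ENNReal.tsum_mul_left]
          congr 1
          apply tsum_congr; intro k
          rw [← ENNReal.tsum_mul_left]
      _ = ∑' k, ∑' l, (ENNReal.ofReal ‖Θ j k l‖ * Fk k * (Bk l * Gl l) +
          Bk j * (ENNReal.ofReal ‖Θ j k l‖ * Fk k * Gl l)) := by
          rw [← ENNReal.tsum_add]
          apply tsum_congr; intro k
          rw [← ENNReal.tsum_add]
      _ = ∑' k, ∑' l, ENNReal.ofReal ‖Θ j k l‖ * (Bk l + Bk j) * Fk k * Gl l := by
          apply tsum_congr; intro k
          apply tsum_congr; intro l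
          ring
  refine hstep1.trans ?_
  have hstep2 : ∀ k l : Zd d,
      ENNReal.ofReal ‖Θ j k l‖ * (Bk l + Bk j) * Fk k * Gl l ≤
      (Kk d N' (j - k) * Fk k) *
        ((ENNReal.ofReal C * (Bk l + Bk j) * Kk d N (j - l)) * Gl l) := by
    intro k l
    have hT : ENNReal.ofReal ‖Θ j k l‖ ≤
        ENNReal.ofReal C * Kk d N' (j - k) * Kk d N (j - l) := by
      calc ENNReal.ofReal ‖Θ j k l‖
          ≤ ENNReal.ofReal (C * jb (znorm (j - k)) ^ (-N) * jb (znorm (j - l)) ^ (-N)) :=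
            ENNReal.ofReal_le_ofReal (hker j k l)
        _ = ENNReal.ofReal C * Kk d N (j - k) * Kk d N (j - l) := by
            rw [ENNReal.ofReal_mul (mul_nonneg hC (Real.rpow_nonneg (jb_nonneg _) _)),
              ENNReal.ofReal_mul hC]
            rfl
        _ ≤ ENNReal.ofReal C * Kk d N' (j - k) * Kk d N (j - l) :=
            mul_le_mul_left (mul_le_mul_right (Kk_mono hNN' _) _) _
    calc ENNReal.ofReal ‖Θ j k l‖ * (Bk l + Bk j) * Fk k * Gl l
        ≤ (ENNReal.ofReal C * Kk d N' (j - k) * Kk d N (j - l)) * (Bk l + Bk j) * Fk k * Gl l := by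
          exact mul_le_mul_left (mul_le_mul_left (mul_le_mul_left hT _) _) _
      _ = (Kk d N' (j - k) * Fk k) *
          ((ENNReal.ofReal C * (Bk l + Bk j) * Kk d N (j - l)) * Gl l) := by ring
  calc ∑' k, ∑' l, ENNReal.ofReal ‖Θ j k l‖ * (Bk l + Bk j) * Fk k * Gl l
      ≤ ∑' k, ∑' l, (Kk d N' (j - k) * Fk k) *
          ((ENNReal.ofReal C * (Bk l + Bk j) * Kk d N (j - l)) * Gl l) :=
        ENNReal.tsum_le_tsum fun k => ENNReal.tsum_le_tsum fun l => hstep2 k l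
    _ = (∑' k, Kk d N' (j - k) * Fk k) *
        (∑' l, (ENNReal.ofReal C * (Bk l + Bk j) * Kk d N (j - l)) * Gl l) := by
        simp_rw [ENNReal.tsum_mul_left]
        rw [ENNReal.tsum_mul_right]

/-- tail estimate for the commutator weight -/
lemma tail_weight {d : ℕ} {N N' C B : ℝ} (hC : 0 ≤ C) (hB : 0 ≤ B) (hNN' : N' < N)
    (b : Zd d → ℂ)
    (hb : ∀ ε : ℝ, 0 < ε → ∃ R : ℝ, ∀ k : Zd d, R < znorm k → ‖b k‖ < ε)
    (hbB : ∀ k, ‖b k‖ ≤ B) :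
    ∀ ε : ℝ, 0 < ε → ∃ M : ℝ, 0 ≤ M ∧ ∀ j k : Zd d, M < znorm j →
      ENNReal.ofReal C * (ENNReal.ofReal ‖b k‖ + ENNReal.ofReal ‖b j‖) * Kk d N (j - k) ≤
      ENNReal.ofReal ε * Kk d N' (j - k) := by
  intro ε hε
  set δ := N - N' with hδ
  have hδ0 : 0 < δ := by simp [hδ]; linarith
  set ε1 := ε / (2 * (C + 1)) with hε1
  have hε1pos : 0 < ε1 := by positivity
  obtain ⟨R, hR⟩ := hb ε1 hε1pos
  set t := (2 * B * C + 1) / ε with ht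
  have ht0 : 0 < t := by positivity
  set A := max 0 (t ^ (1 / δ)) with hA
  have hA0 : 0 ≤ A := le_max_left _ _
  have hjbA : t ≤ jb A ^ δ := by
    have h1 : t ^ (1 / δ) ≤ A := le_max_right _ _
    have h2 : A ≤ jb A := le_jb hA0
    have h3 : t ^ (1 / δ) ≤ jb A := h1.trans h2
    calc t = (t ^ (1 / δ)) ^ δ := by
          rw [← Real.rpow_mul ht0.le, one_div, inv_mul_cancel₀ hδ0.ne', Real.rpow_one]
      _ ≤ jb A ^ δ := Real.rpow_le_rpow (Real.rpow_nonneg ht0.le _) h3 hδ0.le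
  set M := max R 0 + A with hM
  refine ⟨M, by positivity, ?_⟩
  intro j k hj
  -- reduce to a real inequality
  have hreal : C * ((‖b k‖ + ‖b j‖) * jb (znorm (j - k)) ^ (-N)) ≤
      ε * jb (znorm (j - k)) ^ (-N') := by
    by_cases hcase : znorm (j - k) ≤ A
    · -- both b's small
      have hknorm : R < znorm k := by
        have h1 : znorm j ≤ znorm (j - k) + znorm k := znorm_le_sub_add j k
        have h2 : max R 0 + A < znorm j := hj
        have h3 : R ≤ max R 0 := le_max_left _ _
        linarith
      have hjnorm : R < znorm j := by
        have h3 : R ≤ max R 0 := le_max_left _ _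
        have : 0 ≤ A := hA0
        linarith
      have hb1 : ‖b k‖ < ε1 := hR k hknorm
      have hb2 : ‖b j‖ < ε1 := hR j hjnorm
      have hkk : jb (znorm (j - k)) ^ (-N) ≤ jb (znorm (j - k)) ^ (-N') :=
        Real.rpow_le_rpow_of_exponent_le (one_le_jb _) (by linarith)
      have hkpos : (0:ℝ) ≤ jb (znorm (j - k)) ^ (-N') := Real.rpow_nonneg (jb_nonneg _) _
      calc C * ((‖b k‖ + ‖b j‖) * jb (znorm (j - k)) ^ (-N))
          ≤ C * ((2 * ε1) * jb (znorm (j - k)) ^ (-N')) := by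
            apply mul_le_mul_of_nonneg_left _ hC
            apply mul_le_mul (by linarith) hkk (Real.rpow_nonneg (jb_nonneg _) _) (by linarith)
        _ = (C * (2 * ε1)) * jb (znorm (j - k)) ^ (-N') := by ring
        _ ≤ ε * jb (znorm (j - k)) ^ (-N') := by
            apply mul_le_mul_of_nonneg_right _ hkpos
            rw [hε1]
            rw [show C * (2 * (ε / (2 * (C + 1)))) = ε * (C / (C + 1)) by field_simp]
            have : C / (C + 1) ≤ 1 := by
              rw [div_le_one (by linarith)]; linarith
            nlinarith
    · -- kernel decay
      push_neg at hcase
      have hsplit : jb (znorm (j - k)) ^ (-N) =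
          jb (znorm (j - k)) ^ (-N') * jb (znorm (j - k)) ^ (-δ) := by
        rw [← Real.rpow_add (jb_pos _)]
        congr 1
        simp [hδ]
        ring
      have hdecay : jb (znorm (j - k)) ^ (-δ) ≤ jb A ^ (-δ) :=
        rpow_neg_anti (jb_pos A) (jb_mono hA0 hcase.le) hδ0.le
      have hAsmall : 2 * B * C * jb A ^ (-δ) ≤ ε := by
        have hjbApos : 0 < jb A ^ δ := Real.rpow_pos_of_pos (jb_pos A) _
        have h1 : jb A ^ (-δ) = (jb A ^ δ)⁻¹ := by
          rw [Real.rpow_neg (jb_nonneg _)]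
        rw [h1]
        have h2 : (jb A ^ δ)⁻¹ ≤ t⁻¹ := inv_anti₀ ht0 hjbA
        calc 2 * B * C * (jb A ^ δ)⁻¹ ≤ 2 * B * C * t⁻¹ := by
              apply mul_le_mul_of_nonneg_left h2 (by positivity)
          _ = (2 * B * C) * (ε / (2 * B * C + 1)) := by
              rw [ht]; field_simp
          _ ≤ ε := by
              rw [show (2 * B * C) * (ε / (2 * B * C + 1)) = ε * ((2*B*C) / (2*B*C+1)) by ring]
              have : (2*B*C) / (2*B*C+1) ≤ 1 := by
                rw [div_le_one (by positivity)]; linarith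
              nlinarith
      have hkpos : (0:ℝ) ≤ jb (znorm (j - k)) ^ (-N') := Real.rpow_nonneg (jb_nonneg _) _
      calc C * ((‖b k‖ + ‖b j‖) * jb (znorm (j - k)) ^ (-N))
          ≤ C * ((2 * B) * jb (znorm (j - k)) ^ (-N)) := by
            apply mul_le_mul_of_nonneg_left _ hC
            apply mul_le_mul_of_nonneg_right _ (Real.rpow_nonneg (jb_nonneg _) _)
            have := hbB k; have := hbB j; linarith
        _ = (2 * B * C) * (jb (znorm (j - k)) ^ (-N') * jb (znorm (j - k)) ^ (-δ)) := by
            rw [← hsplit]; ring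
        _ ≤ (2 * B * C) * (jb (znorm (j - k)) ^ (-N') * jb A ^ (-δ)) := by
            apply mul_le_mul_of_nonneg_left _ (by positivity)
            exact mul_le_mul_of_nonneg_left hdecay hkpos
        _ = (2 * B * C * jb A ^ (-δ)) * jb (znorm (j - k)) ^ (-N') := by ring
        _ ≤ ε * jb (znorm (j - k)) ^ (-N') := mul_le_mul_of_nonneg_right hAsmall hkpos
  calc ENNReal.ofReal C * (ENNReal.ofReal ‖b k‖ + ENNReal.ofReal ‖b j‖) * Kk d N (j - k)
      = ENNReal.ofReal (C * ((‖b k‖ + ‖b j‖) * jb (znorm (j - k)) ^ (-N))) := by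
        rw [ENNReal.ofReal_mul hC, ENNReal.ofReal_mul (by positivity),
          ENNReal.ofReal_add (norm_nonneg _) (norm_nonneg _)]
        rw [Kk]
        ring
    _ ≤ ENNReal.ofReal (ε * jb (znorm (j - k)) ^ (-N')) := ENNReal.ofReal_le_ofReal hreal
    _ = ENNReal.ofReal ε * Kk d N' (j - k) := by
        rw [ENNReal.ofReal_mul hε.le]
        rfl

end AuxComm
section AuxCompact
open Metric

lemma totallyBounded_of_trunc {d : ℕ} {r : ℝ≥0∞} [Fact (1 ≤ r)]
    (S : Set (lp (fun _ : Zd d => ℂ) r))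
    (Cb : ℝ) (hCb : ∀ h ∈ S, ‖h‖ ≤ Cb)
    (htail : ∀ ε : ℝ, 0 < ε → ∃ F : Finset (Zd d), ∀ h ∈ S,
      ‖h - ∑ j ∈ F, lp.single r j (h j)‖ ≤ ε) :
    TotallyBounded S := by
  classical
  have hr1 : (1:ℝ≥0∞) ≤ r := Fact.out
  have hrne : r ≠ 0 := by
    intro h
    rw [h] at hr1
    simp at hr1
  rw [Metric.totallyBounded_iff]
  intro ε hε
  obtain ⟨F, hF⟩ := htail (ε/3) (by linarith)
  set Cb' := max Cb 0 with hCb'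
  set e : ((↥F : Type) → ℂ) → lp (fun _ : Zd d => ℂ) r :=
    fun v => ∑ j ∈ F.attach, (v j) • lp.single r (j : Zd d) (1:ℂ) with he
  have hecont : Continuous e := by
    apply continuous_finset_sum
    intro j _
    exact ((continuous_apply j).smul continuous_const)
  have hKcompact : IsCompact (e '' Metric.closedBall 0 Cb') :=
    (isCompact_closedBall _ _).image hecont
  obtain ⟨t, htfin, htsub⟩ :=
    (Metric.totallyBounded_iff.mp hKcompact.totallyBounded) (ε/3) (by linarith)
  refine ⟨t, htfin, ?_⟩
  intro h hh
  have htrunc_eq : e (fun j : ↥F => h (j : Zd d)) = ∑ j ∈ F, lp.single r j (h j) := by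
    have hterm : ∀ j ∈ F.attach, (h ((j : Zd d))) •
          lp.single (E := fun _ : Zd d => ℂ) r (j : Zd d) (1:ℂ) =
        lp.single (E := fun _ : Zd d => ℂ) r (j : Zd d) (h (j : Zd d)) := by
      intro j _
      rw [← lp.single_smul (E := fun _ : Zd d => ℂ) r (j : Zd d) (h (j : Zd d)) (1:ℂ)]
      congr 1
      simp [smul_eq_mul]
    have h1 : e (fun j : ↥F => h (j : Zd d)) =
        ∑ j ∈ F.attach, lp.single (E := fun _ : Zd d => ℂ) r (j : Zd d) (h (j : Zd d)) :=
      Finset.sum_congr rfl hterm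
    rw [h1]
    exact Finset.sum_attach F (fun j => lp.single (E := fun _ : Zd d => ℂ) r j (h j))
  have hmem : (∑ j ∈ F, lp.single r j (h j)) ∈ e '' Metric.closedBall 0 Cb' := by
    refine ⟨fun j : ↥F => h (j : Zd d), ?_, htrunc_eq⟩
    rw [Metric.mem_closedBall, dist_zero_right]
    apply pi_norm_le_iff_of_nonneg (le_max_right Cb 0) |>.mpr
    intro j
    calc ‖h (j : Zd d)‖ ≤ ‖h‖ := lp.norm_apply_le_norm hrne h _
      _ ≤ Cb := hCb h hh
      _ ≤ Cb' := le_max_left _ _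
  obtain ⟨y, hy⟩ := Set.mem_iUnion₂.mp (htsub hmem)
  obtain ⟨hyt, hyb⟩ := hy
  apply Set.mem_iUnion₂.mpr
  refine ⟨y, hyt, ?_⟩
  rw [Metric.mem_ball]
  have h1 : dist h (∑ j ∈ F, lp.single r j (h j)) ≤ ε/3 := by
    rw [dist_eq_norm]
    exact hF h hh
  have h2 : dist (∑ j ∈ F, lp.single r j (h j)) y < ε/3 := Metric.mem_ball.mp hyb
  calc dist h y ≤ dist h (∑ j ∈ F, lp.single r j (h j)) +
        dist (∑ j ∈ F, lp.single r j (h j)) y := dist_triangle _ _ _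
    _ < ε/3 + ε/3 := by linarith
    _ < ε := by linarith

end AuxCompact
section AuxFinal
open ENNReal

lemma ball_finite {d : ℕ} (M : ℝ) : {k : Zd d | znorm k ≤ M}.Finite := by
  classical
  apply Set.Finite.subset (Set.finite_Icc (fun _ => (-⌈M⌉ : ℤ)) (fun _ => ⌈M⌉))
  intro k hk
  simp only [Set.mem_setOf_eq] at hk
  simp only [Set.mem_Icc, Pi.le_def]
  constructor <;> intro i
  · have h1 : |(k i : ℝ)| ≤ M := le_trans (coord_abs_le_znorm k i) hk
    have h2 := Int.le_ceil M
    have : -(⌈M⌉ : ℝ) ≤ (k i : ℝ) := by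
      cases' abs_le.mp h1 with hl hr
      linarith
    exact_mod_cast this
  · have h1 : |(k i : ℝ)| ≤ M := le_trans (coord_abs_le_znorm k i) hk
    have h2 := Int.le_ceil M
    have : (k i : ℝ) ≤ (⌈M⌉ : ℝ) := by
      cases' abs_le.mp h1 with hl hr
      linarith
    exact_mod_cast this

lemma lp_norm_le_of_bound {d : ℕ} {r : ℝ≥0∞} [Fact (1 ≤ r)] (hr' : r ≠ ∞)
    (h : lp (fun _ : Zd d => ℂ) r) (D : ℝ≥0∞) (hD : D ≠ ∞)
    (hbound : ∑' j : Zd d, (ENNReal.ofReal ‖h j‖) ^ r.toReal ≤ D ^ r.toReal) :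
    ‖h‖ ≤ D.toReal := by
  have hr1 : (1:ℝ≥0∞) ≤ r := Fact.out
  have hR1 : (1:ℝ) ≤ r.toReal := by
    have := ENNReal.toReal_mono hr' hr1; simpa using this
  have hR0 : (0:ℝ) < r.toReal := lt_of_lt_of_le one_pos hR1
  apply lp.norm_le_of_tsum_le hR0 ENNReal.toReal_nonneg
  have hsum : Summable (fun j : Zd d => ‖h j‖ ^ r.toReal) :=
    (memℓp_gen_iff hR0).mp (lp.memℓp h)
  have heq : ENNReal.ofReal (∑' j : Zd d, ‖h j‖ ^ r.toReal) =
      ∑' j : Zd d, (ENNReal.ofReal ‖h j‖) ^ r.toReal := by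
    rw [ENNReal.ofReal_tsum_of_nonneg (fun j => Real.rpow_nonneg (norm_nonneg _) _) hsum]
    apply tsum_congr; intro j
    rw [ENNReal.ofReal_rpow_of_nonneg (norm_nonneg _) hR0.le]
  have h2 : ENNReal.ofReal (∑' j : Zd d, ‖h j‖ ^ r.toReal) ≤ D ^ r.toReal :=
    heq.le.trans hbound
  have h3 := (ENNReal.ofReal_le_iff_le_toReal
    (ENNReal.rpow_ne_top_of_nonneg hR0.le hD)).mp h2
  calc ∑' j : Zd d, ‖h j‖ ^ r.toReal ≤ (D ^ r.toReal).toReal := h3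
    _ = D.toReal ^ r.toReal := (ENNReal.toReal_rpow D r.toReal).symm

end AuxFinal
/-- Theorem 3: if `sup |Θ(j,k,ℓ)| ⟨|j−k|+|j−ℓ|⟩^{2N} < ∞` for some `N > d` and
`b ∈ c₀(ℤ^d)`, then the commutators `[𝒯_Θ, b]ᵢ`, `i = 1, 2`, are compact
`ℓ^p × ℓ^q → ℓ^r`: the image of the product of unit balls is totally bounded in `ℓ^r`. -/
theorem stmt_8 {d : ℕ} (hd : 1 ≤ d) (N : ℝ) (hN : (d : ℝ) < N)
    (Θ : Zd d → Zd d → Zd d → ℂ)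
    (hΘ : (⨆ j : Zd d, ⨆ k : Zd d, ⨆ l : Zd d,
      ENNReal.ofReal (‖Θ j k l‖ * jb (znorm (j - k) + znorm (j - l)) ^ (2 * N))) ≠ ∞)
    (b : Zd d → ℂ)
    (hb : ∀ ε : ℝ, 0 < ε → ∃ R : ℝ, ∀ k : Zd d, R < znorm k → ‖b k‖ < ε)
    (p q r : ℝ≥0∞) (hp : 1 ≤ p) (hq : 1 ≤ q) (hr : 1 ≤ r) (hr' : r ≠ ∞)
    [Fact (1 ≤ r)] (hpqr : p⁻¹ + q⁻¹ = r⁻¹) :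
    TotallyBounded {h : lp (fun _ : Zd d => ℂ) r | ∃ f g : Zd d → ℂ,
        lpNorm p f ≤ 1 ∧ lpNorm q g ≤ 1 ∧ ∀ j : Zd d, h j = comm1 Θ b f g j} ∧
    TotallyBounded {h : lp (fun _ : Zd d => ℂ) r | ∃ f g : Zd d → ℂ,
        lpNorm p f ≤ 1 ∧ lpNorm q g ≤ 1 ∧ ∀ j : Zd d, h j = comm2 Θ b f g j} := by
  classical
  have hd0 : (0:ℝ) < d := by exact_mod_cast hd
  have hN0 : 0 ≤ N := by linarith
  set N' : ℝ := (N + d) / 2 with hN'def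
  have hdN' : (d:ℝ) < N' := by rw [hN'def]; linarith
  have hN'N : N' < N := by rw [hN'def]; linarith
  have hN'leN : N' ≤ N := hN'N.le
  set K : Zd d → ℝ≥0∞ := Kk d N' with hKdef
  set S : ℝ≥0∞ := ∑' m : Zd d, K m with hSdef
  have hS0 : S ≠ 0 := sumK_ne_zero N'
  have hStop : S ≠ ∞ := sumK_ne_top hd hdN'
  obtain ⟨C, hC0, hker⟩ := kernel_bound hN0 Θ hΘ
  obtain ⟨B, hB0, hbB⟩ := c0_bounded b hb
  have hR1 : (1:ℝ) ≤ r.toReal := by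
    have := ENNReal.toReal_mono hr' hr; simpa using this
  have hR0 : (0:ℝ) < r.toReal := lt_of_lt_of_le one_pos hR1
  set s2 : ℝ := (S * S).toReal with hs2def
  have hs2nonneg : (0:ℝ) ≤ s2 := ENNReal.toReal_nonneg
  have hSS : S * S ≠ ∞ := ENNReal.mul_ne_top hStop hStop
  set c1 : ℝ≥0∞ := ENNReal.ofReal C * (ENNReal.ofReal B + ENNReal.ofReal B) with hc1def
  have hc1top : c1 ≠ ∞ :=
    ENNReal.mul_ne_top ENNReal.ofReal_ne_top
      (ENNReal.add_ne_top.mpr ⟨ENNReal.ofReal_ne_top, ENNReal.ofReal_ne_top⟩)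
  -- the global weight bound
  have hWg : ∀ j k : Zd d,
      ENNReal.ofReal C * (ENNReal.ofReal ‖b k‖ + ENNReal.ofReal ‖b j‖) * Kk d N (j - k) ≤
      c1 * K (j - k) := by
    intro j k
    rw [hc1def, hKdef, mul_assoc, mul_assoc]
    apply mul_le_mul_right
    apply mul_le_mul'
    · exact add_le_add (ENNReal.ofReal_le_ofReal (hbB k)) (ENNReal.ofReal_le_ofReal (hbB j))
    · exact Kk_mono hN'leN _
  -- the tail weight data
  have htailW : ∀ ε' : ℝ, 0 < ε' → ∃ M : ℝ, 0 ≤ M ∧ ∀ j k : Zd d, M < znorm j →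
      ENNReal.ofReal C * (ENNReal.ofReal ‖b k‖ + ENNReal.ofReal ‖b j‖) * Kk d N (j - k) ≤
      ENNReal.ofReal ε' * Kk d N' (j - k) :=
    tail_weight hC0 hB0 hN'N b hb hbB
  constructor
  · -- commutator 1
    apply totallyBounded_of_trunc _ ((c1 * 1 * (S * S)).toReal)
    · -- norm bound
      rintro h ⟨f, g, hf, hg, hcoord⟩
      apply lp_norm_le_of_bound hr' h _
        (ENNReal.mul_ne_top (ENNReal.mul_ne_top hc1top (by simp)) hSS)
      have hmaster := master K hS0 hStop
        (fun j k => ENNReal.ofReal C * (ENNReal.ofReal ‖b k‖ + ENNReal.ofReal ‖b j‖) *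
          Kk d N (j - k))
        (fun j l => K (j - l)) c1 1 hWg (fun j l => (one_mul (K (j - l))).symm.le)
        (fun k => ENNReal.ofReal ‖f k‖) (fun l => ENNReal.ofReal ‖g l‖)
        hp hq hr hr' hpqr hf hg
      refine le_trans ?_ hmaster
      apply ENNReal.tsum_le_tsum
      intro j
      apply ENNReal.rpow_le_rpow _ hR0.le
      rw [hcoord j]
      exact pointwise_comm1 hC0 hN'leN Θ hker b f g j
    · -- tails
      intro ε hε
      set ε' : ℝ := ε / (s2 + 1) with hε'def
      have hε'pos : 0 < ε' := by rw [hε'def]; positivity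
      obtain ⟨M, hM0, hM⟩ := htailW ε' hε'pos
      refine ⟨(ball_finite M).toFinset, ?_⟩
      rintro h ⟨f, g, hf, hg, hcoord⟩
      set Fs := (ball_finite (d := d) M).toFinset with hFs
      set trunc := ∑ j ∈ Fs, lp.single r j (h j) with htrunc
      have hDcoord : ∀ j : Zd d, (↑(h - trunc) : Zd d → ℂ) j =
          if j ∈ Fs then 0 else h j := by
        intro j
        rw [lp.coeFn_sub, Pi.sub_apply, htrunc]
        have hts : (↑(∑ j ∈ Fs, lp.single r j (h j)) : Zd d → ℂ) j =
            if j ∈ Fs then h j else 0 := by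
          simp only [lp.coeFn_sum, Finset.sum_apply, lp.single_apply, Finset.sum_dite_eq, Pi.single_apply, Finset.sum_ite_eq]
        rw [hts]
        by_cases hjF : j ∈ Fs <;> simp [hjF]
      have hkey : ‖h - trunc‖ ≤ (ENNReal.ofReal ε' * 1 * (S * S)).toReal := by
        apply lp_norm_le_of_bound hr' _ _
          (ENNReal.mul_ne_top (ENNReal.mul_ne_top ENNReal.ofReal_ne_top (by simp)) hSS)
        set W' : Zd d → Zd d → ℝ≥0∞ := fun j k =>
          if M < znorm j then ENNReal.ofReal C *
            (ENNReal.ofReal ‖b k‖ + ENNReal.ofReal ‖b j‖) * Kk d N (j - k) else 0 with hW'def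
        have hW' : ∀ j k, W' j k ≤ ENNReal.ofReal ε' * K (j - k) := by
          intro j k
          simp only [hW'def]
          by_cases hj : M < znorm j
          · rw [if_pos hj]; exact hM j k hj
          · rw [if_neg hj]; exact zero_le
        have hmaster := master K hS0 hStop W' (fun j l => K (j - l)) (ENNReal.ofReal ε') 1
          hW' (fun j l => (one_mul (K (j - l))).symm.le)
          (fun k => ENNReal.ofReal ‖f k‖) (fun l => ENNReal.ofReal ‖g l‖)
          hp hq hr hr' hpqr hf hg
        refine le_trans ?_ hmaster
        apply ENNReal.tsum_le_tsum
        intro j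
        by_cases hjF : j ∈ Fs
        · rw [hDcoord j, if_pos hjF]
          rw [norm_zero, ENNReal.ofReal_zero, ENNReal.zero_rpow_of_pos hR0]
          exact zero_le
        · have hjM : M < znorm j := by
            rw [hFs, Set.Finite.mem_toFinset, Set.mem_setOf_eq, not_le] at hjF
            exact hjF
          rw [hDcoord j, if_neg hjF, hcoord j]
          apply ENNReal.rpow_le_rpow _ hR0.le
          refine (pointwise_comm1 hC0 hN'leN Θ hker b f g j).trans (le_of_eq ?_)
          congr 1
          apply tsum_congr
          intro k
          simp only [hW'def]
          rw [if_pos hjM]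
      refine hkey.trans ?_
      have heq : (ENNReal.ofReal ε' * 1 * (S * S)).toReal = ε' * s2 := by
        rw [mul_one, ENNReal.toReal_mul, ENNReal.toReal_ofReal hε'pos.le, hs2def]
      rw [heq, hε'def]
      rw [div_mul_eq_mul_div]
      rw [div_le_iff₀ (by positivity)]
      nlinarith
  · -- commutator 2
    apply totallyBounded_of_trunc _ ((1 * c1 * (S * S)).toReal)
    · -- norm bound
      rintro h ⟨f, g, hf, hg, hcoord⟩
      apply lp_norm_le_of_bound hr' h _
        (ENNReal.mul_ne_top (ENNReal.mul_ne_top (by simp) hc1top) hSS)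
      have hmaster := master K hS0 hStop (fun j k => K (j - k))
        (fun j l => ENNReal.ofReal C * (ENNReal.ofReal ‖b l‖ + ENNReal.ofReal ‖b j‖) *
          Kk d N (j - l))
        1 c1 (fun j k => (one_mul (K (j - k))).symm.le) (fun j l => hWg j l)
        (fun k => ENNReal.ofReal ‖f k‖) (fun l => ENNReal.ofReal ‖g l‖)
        hp hq hr hr' hpqr hf hg
      refine le_trans ?_ hmaster
      apply ENNReal.tsum_le_tsum
      intro j
      apply ENNReal.rpow_le_rpow _ hR0.le
      rw [hcoord j]
      exact pointwise_comm2 hC0 hN'leN Θ hker b f g j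
    · -- tails
      intro ε hε
      set ε' : ℝ := ε / (s2 + 1) with hε'def
      have hε'pos : 0 < ε' := by rw [hε'def]; positivity
      obtain ⟨M, hM0, hM⟩ := htailW ε' hε'pos
      refine ⟨(ball_finite M).toFinset, ?_⟩
      rintro h ⟨f, g, hf, hg, hcoord⟩
      set Fs := (ball_finite (d := d) M).toFinset with hFs
      set trunc := ∑ j ∈ Fs, lp.single r j (h j) with htrunc
      have hDcoord : ∀ j : Zd d, (↑(h - trunc) : Zd d → ℂ) j =
          if j ∈ Fs then 0 else h j := by
        intro j
        rw [lp.coeFn_sub, Pi.sub_apply, htrunc]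
        have hts : (↑(∑ j ∈ Fs, lp.single r j (h j)) : Zd d → ℂ) j =
            if j ∈ Fs then h j else 0 := by
          simp only [lp.coeFn_sum, Finset.sum_apply, lp.single_apply, Finset.sum_dite_eq, Pi.single_apply, Finset.sum_ite_eq]
        rw [hts]
        by_cases hjF : j ∈ Fs <;> simp [hjF]
      have hkey : ‖h - trunc‖ ≤ (1 * ENNReal.ofReal ε' * (S * S)).toReal := by
        apply lp_norm_le_of_bound hr' _ _
          (ENNReal.mul_ne_top (ENNReal.mul_ne_top (by simp) ENNReal.ofReal_ne_top) hSS)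
        set V' : Zd d → Zd d → ℝ≥0∞ := fun j l =>
          if M < znorm j then ENNReal.ofReal C *
            (ENNReal.ofReal ‖b l‖ + ENNReal.ofReal ‖b j‖) * Kk d N (j - l) else 0 with hV'def
        have hV' : ∀ j l, V' j l ≤ ENNReal.ofReal ε' * K (j - l) := by
          intro j l
          simp only [hV'def]
          by_cases hj : M < znorm j
          · rw [if_pos hj]; exact hM j l hj
          · rw [if_neg hj]; exact zero_le
        have hmaster := master K hS0 hStop (fun j k => K (j - k)) V' 1 (ENNReal.ofReal ε')
          (fun j k => (one_mul (K (j - k))).symm.le) hV'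
          (fun k => ENNReal.ofReal ‖f k‖) (fun l => ENNReal.ofReal ‖g l‖)
          hp hq hr hr' hpqr hf hg
        refine le_trans ?_ hmaster
        apply ENNReal.tsum_le_tsum
        intro j
        by_cases hjF : j ∈ Fs
        · rw [hDcoord j, if_pos hjF]
          rw [norm_zero, ENNReal.ofReal_zero, ENNReal.zero_rpow_of_pos hR0]
          exact zero_le
        · have hjM : M < znorm j := by
            rw [hFs, Set.Finite.mem_toFinset, Set.mem_setOf_eq, not_le] at hjF
            exact hjF
          rw [hDcoord j, if_neg hjF, hcoord j]
          apply ENNReal.rpow_le_rpow _ hR0.le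
          refine (pointwise_comm2 hC0 hN'leN Θ hker b f g j).trans (le_of_eq ?_)
          congr 1
          apply tsum_congr
          intro l
          simp only [hV'def]
          rw [if_pos hjM]
      refine hkey.trans ?_
      have heq : (1 * ENNReal.ofReal ε' * (S * S)).toReal = ε' * s2 := by
        rw [one_mul, ENNReal.toReal_mul, ENNReal.toReal_ofReal hε'pos.le, hs2def]
      rw [heq, hε'def]
      rw [div_mul_eq_mul_div]
      rw [div_le_iff₀ (by positivity)]
      nlinarith
end
end

section
/- (Corollary 3) Let d ≥ 1, s₁, s₂, ω ∈ ℝ, N₀ := d + ω₊ + (1/2)(|s₁+ω| + |s₂+ω|) with ω₊ = max(ω,0), and N ∈ ℕ with N > N₀. Suppose that Θ ∈ BT^{ω,N}(ℤ^d) if ω ≥ 0, and Θ ∈ BT^{2ω,N}(ℤ^d) if ω < 0. Then 𝒯_Θ is a bounded bilinear operator from ℓ^p_{s₁+ω}(ℤ^d) × ℓ^q_{s₂+ω}(ℤ^d) to ℓ^r_{s₁+s₂}(ℤ^d) for any 1 ≤ p, q, r ≤ ∞ with 1/p + 1/q = 1/r. In particular, for every Θ in the class BT^0(ℤ^d) :=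 ∪_{N > d} BT^{0,N}(ℤ^d), the operator 𝒯_Θ is bounded from ℓ^p(ℤ^d) × ℓ^q(ℤ^d) to ℓ^r(ℤ^d) for any such p, q, r. -/
open scoped ENNReal NNReal BigOperators

noncomputable section

namespace Stmt10Aux

lemma jb_pos (x : ℝ) : 0 < jb x := by
  unfold jb; positivity

lemma one_le_jb (x : ℝ) : 1 ≤ jb x := by
  have h := Real.sqrt_le_sqrt (show (1:ℝ) ≤ 1 + x ^ 2 by nlinarith [sq_nonneg x])
  simpa [jb] using h

lemma jb_mono {x y : ℝ} (hx : 0 ≤ x) (h : x ≤ y) : jb x ≤ jb y := by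
  unfold jb
  exact Real.sqrt_le_sqrt (by nlinarith)

lemma jb_add_le (x y : ℝ) : jb (x + y) ≤ Real.sqrt 2 * jb x * jb y := by
  unfold jb
  rw [← Real.sqrt_mul (by norm_num), ← Real.sqrt_mul (by positivity)]
  exact Real.sqrt_le_sqrt (by nlinarith [sq_nonneg (x - y), sq_nonneg (x*y)])

lemma sqrt_nine : Real.sqrt 9 = 3 := by
  rw [show (9:ℝ) = 3^2 by norm_num]
  exact Real.sqrt_sq (by norm_num)

lemma jb_three_mul (x : ℝ) : jb (3 * x) ≤ 3 * jb x := by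
  unfold jb
  calc Real.sqrt (1 + (3*x) ^ 2) ≤ Real.sqrt (9 * (1 + x ^ 2)) :=
        Real.sqrt_le_sqrt (by nlinarith)
    _ = 3 * Real.sqrt (1 + x ^ 2) := by
        rw [Real.sqrt_mul (by norm_num), sqrt_nine]

lemma jb_rpow_pos (x s : ℝ) : 0 < jb x ^ s := Real.rpow_pos_of_pos (jb_pos x) s

lemma one_le_jb_rpow {x s : ℝ} (hs : 0 ≤ s) : 1 ≤ jb x ^ s :=
  Real.one_le_rpow (one_le_jb x) hs

lemma jb_rpow_le_one {x s : ℝ} (hs : s ≤ 0) : jb x ^ s ≤ 1 :=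
  Real.rpow_le_one_of_one_le_of_nonpos (one_le_jb x) hs

/-- Peetre-type inequality. -/
lemma jb_peetre {a b c : ℝ} (s : ℝ) (h1 : a ≤ b + c) (h2 : b ≤ a + c)
    (ha : 0 ≤ a) (hb : 0 ≤ b) :
    jb a ^ s ≤ (Real.sqrt 2 * jb c) ^ |s| * jb b ^ s := by
  have h2pos : (0:ℝ) < Real.sqrt 2 * jb c := by
    have := jb_pos c; positivity
  rcases le_or_gt 0 s with hs | hs
  · rw [abs_of_nonneg hs]
    calc jb a ^ s ≤ (jb (b + c)) ^ s :=
          Real.rpow_le_rpow (jb_pos a).le (jb_mono ha h1) hs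
      _ ≤ (Real.sqrt 2 * jb b * jb c) ^ s :=
          Real.rpow_le_rpow (jb_pos (b+c)).le (jb_add_le b c) hs
      _ = (Real.sqrt 2 * jb c) ^ s * jb b ^ s := by
          rw [show Real.sqrt 2 * jb b * jb c = (Real.sqrt 2 * jb c) * jb b by ring,
            Real.mul_rpow h2pos.le (jb_pos b).le]
  · rw [abs_of_neg hs]
    have key : jb b / (Real.sqrt 2 * jb c) ≤ jb a := by
      rw [div_le_iff₀ h2pos]
      calc jb b ≤ jb (a + c) := jb_mono hb h2
        _ ≤ Real.sqrt 2 * jb a * jb c := jb_add_le a c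
        _ = jb a * (Real.sqrt 2 * jb c) := by ring
    have hq : (0:ℝ) < jb b / (Real.sqrt 2 * jb c) := by
      have := jb_pos b; positivity
    calc jb a ^ s ≤ (jb b / (Real.sqrt 2 * jb c)) ^ s :=
          Real.rpow_le_rpow_of_nonpos hq key hs.le
      _ = jb b ^ s / (Real.sqrt 2 * jb c) ^ s :=
          Real.div_rpow (jb_pos b).le h2pos.le s
      _ = (Real.sqrt 2 * jb c) ^ (-s) * jb b ^ s := by
          rw [Real.rpow_neg h2pos.le]; field_simp

end Stmt10Aux
namespace Stmt10Aux

/-- Embedding of `ℤ^d` into Euclidean space. -/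
def emb {d : ℕ} (j : Zd d) : EuclideanSpace ℝ (Fin d) := WithLp.toLp 2 (fun i => (j i : ℝ))

lemma znorm_eq {d : ℕ} (j : Zd d) : znorm j = ‖emb j‖ := by
  rw [EuclideanSpace.norm_eq]
  unfold znorm emb
  congr 1
  refine Finset.sum_congr rfl fun i _ => ?_
  rw [Real.norm_eq_abs, sq_abs]

lemma emb_add {d : ℕ} (j k : Zd d) : emb (j + k) = emb j + emb k := by
  ext i; simp [emb]

lemma emb_sub {d : ℕ} (j k : Zd d) : emb (j - k) = emb j - emb k := by
  ext i; simp [emb]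

lemma znorm_nonneg {d : ℕ} (j : Zd d) : 0 ≤ znorm j := by
  rw [znorm_eq]; exact norm_nonneg _

lemma znorm_sub_comm {d : ℕ} (j k : Zd d) : znorm (j - k) = znorm (k - j) := by
  rw [znorm_eq, znorm_eq, emb_sub, emb_sub, norm_sub_rev]

lemma znorm_tri₁ {d : ℕ} (j k : Zd d) : znorm j ≤ znorm k + znorm (j - k) := by
  rw [znorm_eq, znorm_eq, znorm_eq, emb_sub]
  exact norm_le_norm_add_norm_sub' _ _

lemma znorm_tri₂ {d : ℕ} (j k : Zd d) : znorm k ≤ znorm j + znorm (j - k) := by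
  rw [znorm_sub_comm]
  exact znorm_tri₁ k j

end Stmt10Aux
namespace Stmt10Aux

/-- The constant in the weight chain inequality. -/
def Cw (t₁ t₂ ω : ℝ) : ℝ :=
  Real.sqrt 2 ^ |t₁| * Real.sqrt 2 ^ |t₂| * (3 * Real.sqrt 2) ^ max ω 0

lemma Cw_pos (t₁ t₂ ω : ℝ) : 0 < Cw t₁ t₂ ω := by
  unfold Cw
  have h2 : (0:ℝ) < Real.sqrt 2 := by positivity
  exact mul_pos (mul_pos (Real.rpow_pos_of_pos h2 _) (Real.rpow_pos_of_pos h2 _))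
    (Real.rpow_pos_of_pos (by linarith) _)

lemma weight_chain (s₁ s₂ ω M : ℝ) (N : ℕ)
    (hM : M = (N:ℝ) - max ω 0 - (|s₁ + ω| + |s₂ + ω|) / 2) (hM0 : 0 ≤ M)
    {J K L DK DL : ℝ} (hJ : 0 ≤ J) (hK : 0 ≤ K) (hL : 0 ≤ L)
    (hDK : 0 ≤ DK) (hDL : 0 ≤ DL)
    (hJK : J ≤ K + DK) (hKJ : K ≤ J + DK) (hJL : J ≤ L + DL) (hLJ : L ≤ J + DL) :
    jb J ^ (s₁ + s₂) *
      ((if 0 ≤ ω then jb (J + K + L) ^ ω else jb (J + K + L) ^ (2 * ω)) *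
        jb (DK + DL) ^ (-(2 * (N : ℝ)))) ≤
    Cw (s₁ + ω) (s₂ + ω) ω *
      (jb K ^ (s₁ + ω) * jb L ^ (s₂ + ω) * (jb DK ^ (-M) * jb DL ^ (-M))) := by
  set t₁ := s₁ + ω with ht₁
  set t₂ := s₂ + ω with ht₂
  set ωp := max ω 0 with hωp
  have hωp0 : 0 ≤ ωp := le_max_right _ _
  have h2 : (0:ℝ) < Real.sqrt 2 := by positivity
  set D := DK + DL with hD
  set S := J + K + L with hS
  -- split the J-weight
  have hsplit : jb J ^ (s₁ + s₂) = jb J ^ t₁ * jb J ^ t₂ * jb J ^ (-(2*ω)) := by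
    rw [← Real.rpow_add (jb_pos J), ← Real.rpow_add (jb_pos J)]
    congr 1; rw [ht₁, ht₂]; ring
  -- Peetre bounds
  have P1 : jb J ^ t₁ ≤ (Real.sqrt 2 * jb DK) ^ |t₁| * jb K ^ t₁ :=
    jb_peetre t₁ hJK hKJ hJ hK
  have P2 : jb J ^ t₂ ≤ (Real.sqrt 2 * jb DL) ^ |t₂| * jb L ^ t₂ :=
    jb_peetre t₂ hJL hLJ hJ hL
  -- bound for the ω-part
  have P4 : jb J ^ (-(2*ω)) *
      (if 0 ≤ ω then jb S ^ ω else jb S ^ (2*ω)) ≤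
      (3 * Real.sqrt 2) ^ ωp * jb D ^ (2 * ωp) := by
    by_cases hω : 0 ≤ ω
    · simp only [hω, if_true]
      have hωp_eq : ωp = ω := max_eq_left hω
      have hSle : jb S ≤ 3 * Real.sqrt 2 * (jb J * jb D) := by
        calc jb S ≤ jb (3 * J + D) := by
              apply jb_mono (by positivity) (by rw [hS, hD]; linarith)
          _ ≤ Real.sqrt 2 * jb (3*J) * jb D := jb_add_le _ _
          _ ≤ Real.sqrt 2 * (3 * jb J) * jb D :=
              mul_le_mul_of_nonneg_right
                (mul_le_mul_of_nonneg_left (jb_three_mul J) h2.le) (jb_pos D).le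
          _ = 3 * Real.sqrt 2 * (jb J * jb D) := by ring
      have hs : jb S ^ ω ≤ ((3 * Real.sqrt 2) * (jb J * jb D)) ^ ω :=
        Real.rpow_le_rpow (jb_pos S).le hSle hω
      have hexp : ((3 * Real.sqrt 2) * (jb J * jb D)) ^ ω
          = (3 * Real.sqrt 2) ^ ω * (jb J ^ ω * jb D ^ ω) := by
        rw [Real.mul_rpow (by positivity) (mul_nonneg (jb_pos J).le (jb_pos D).le),
          Real.mul_rpow (jb_pos J).le (jb_pos D).le]
      calc jb J ^ (-(2*ω)) * jb S ^ ω
          ≤ jb J ^ (-(2*ω)) * ((3 * Real.sqrt 2) ^ ω * (jb J ^ ω * jb D ^ ω)) := by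
            apply mul_le_mul_of_nonneg_left (hs.trans_eq hexp) (jb_rpow_pos _ _).le
        _ = (3 * Real.sqrt 2) ^ ω * ((jb J ^ (-(2*ω)) * jb J ^ ω) * jb D ^ ω) := by ring
        _ ≤ (3 * Real.sqrt 2) ^ ω * (1 * jb D ^ ω) := by
            apply mul_le_mul_of_nonneg_left _ (Real.rpow_pos_of_pos (by positivity) _).le
            apply mul_le_mul_of_nonneg_right _ (jb_rpow_pos _ _).le
            rw [← Real.rpow_add (jb_pos J)]
            exact jb_rpow_le_one (by linarith)
        _ ≤ (3 * Real.sqrt 2) ^ ωp * jb D ^ (2 * ωp) := by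
            rw [one_mul, hωp_eq]
            apply mul_le_mul_of_nonneg_left _ (Real.rpow_pos_of_pos (by positivity) _).le
            exact Real.rpow_le_rpow_of_exponent_le (one_le_jb D) (by linarith)
    · simp only [hω, if_false]
      push_neg at hω
      have hωp_eq : ωp = 0 := max_eq_right hω.le
      have hJS : jb J ≤ jb S := jb_mono hJ (by rw [hS]; linarith)
      have : jb S ^ (2*ω) ≤ jb J ^ (2*ω) :=
        Real.rpow_le_rpow_of_nonpos (jb_pos J) hJS (by linarith)
      calc jb J ^ (-(2*ω)) * jb S ^ (2*ω) ≤ jb J ^ (-(2*ω)) * jb J ^ (2*ω) :=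
            mul_le_mul_of_nonneg_left this (jb_rpow_pos _ _).le
        _ = 1 := by rw [← Real.rpow_add (jb_pos J)]; simp
        _ = (3 * Real.sqrt 2) ^ ωp * jb D ^ (2 * ωp) := by
            rw [hωp_eq]; simp
  -- bound of the difference part
  have hDKD : jb DK ≤ jb D := jb_mono hDK (by rw [hD]; linarith)
  have hDLD : jb DL ≤ jb D := jb_mono hDL (by rw [hD]; linarith)
  have P5 : jb DK ^ |t₁| * jb DL ^ |t₂| * (jb D ^ (2*ωp) * jb D ^ (-(2*(N:ℝ)))) ≤
      jb DK ^ (-M) * jb DL ^ (-M) := by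
    calc jb DK ^ |t₁| * jb DL ^ |t₂| * (jb D ^ (2*ωp) * jb D ^ (-(2*(N:ℝ))))
        ≤ jb D ^ |t₁| * jb D ^ |t₂| * (jb D ^ (2*ωp) * jb D ^ (-(2*(N:ℝ)))) := by
          apply mul_le_mul_of_nonneg_right _
            (mul_nonneg (jb_rpow_pos _ _).le (jb_rpow_pos _ _).le)
          apply mul_le_mul (Real.rpow_le_rpow (jb_pos DK).le hDKD (abs_nonneg _))
            (Real.rpow_le_rpow (jb_pos DL).le hDLD (abs_nonneg _))
            (jb_rpow_pos _ _).le (jb_rpow_pos _ _).le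
      _ = jb D ^ (|t₁| + |t₂| + (2*ωp + (-(2*(N:ℝ))))) := by
          rw [Real.rpow_add (jb_pos D), Real.rpow_add (jb_pos D),
            Real.rpow_add (jb_pos D)]
      _ = jb D ^ (-M) * jb D ^ (-M) := by
          rw [← Real.rpow_add (jb_pos D)]
          congr 1
          rw [hM, ht₁, ht₂, hωp]; ring
      _ ≤ jb DK ^ (-M) * jb DL ^ (-M) := by
          apply mul_le_mul
            (Real.rpow_le_rpow_of_nonpos (jb_pos DK) hDKD (by linarith))
            (Real.rpow_le_rpow_of_nonpos (jb_pos DL) hDLD (by linarith))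
            (jb_rpow_pos _ _).le (jb_rpow_pos _ _).le
  -- combine everything
  have posDK : 0 < (Real.sqrt 2 * jb DK) ^ |t₁| :=
    Real.rpow_pos_of_pos (mul_pos h2 (jb_pos DK)) _
  have posDL : 0 < (Real.sqrt 2 * jb DL) ^ |t₂| :=
    Real.rpow_pos_of_pos (mul_pos h2 (jb_pos DL)) _
  have pos3 : (0:ℝ) < 3 * Real.sqrt 2 := by positivity
  have posC : 0 < Real.sqrt 2 ^ |t₁| * Real.sqrt 2 ^ |t₂| * (3 * Real.sqrt 2) ^ ωp :=
    mul_pos (mul_pos (Real.rpow_pos_of_pos h2 _) (Real.rpow_pos_of_pos h2 _))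
      (Real.rpow_pos_of_pos pos3 _)
  have hIf : 0 ≤ (if 0 ≤ ω then jb S ^ ω else jb S ^ (2*ω)) := by
    split <;> exact (jb_rpow_pos _ _).le
  have hP12 : jb J ^ t₁ * jb J ^ t₂ ≤
      ((Real.sqrt 2 * jb DK) ^ |t₁| * jb K ^ t₁) *
        ((Real.sqrt 2 * jb DL) ^ |t₂| * jb L ^ t₂) :=
    mul_le_mul P1 P2 (jb_rpow_pos _ _).le
      (mul_pos posDK (jb_rpow_pos _ _)).le
  calc jb J ^ (s₁ + s₂) *
      ((if 0 ≤ ω then jb S ^ ω else jb S ^ (2*ω)) * jb D ^ (-(2 * (N:ℝ))))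
      = (jb J ^ t₁ * jb J ^ t₂) *
        ((jb J ^ (-(2*ω)) * (if 0 ≤ ω then jb S ^ ω else jb S ^ (2*ω))) *
          jb D ^ (-(2 * (N:ℝ)))) := by rw [hsplit]; ring
    _ ≤ (((Real.sqrt 2 * jb DK) ^ |t₁| * jb K ^ t₁) *
          ((Real.sqrt 2 * jb DL) ^ |t₂| * jb L ^ t₂)) *
        (((3 * Real.sqrt 2) ^ ωp * jb D ^ (2 * ωp)) * jb D ^ (-(2 * (N:ℝ)))) := by
        apply mul_le_mul hP12
          (mul_le_mul_of_nonneg_right P4 (jb_rpow_pos _ _).le)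
          (mul_nonneg (mul_nonneg (jb_rpow_pos _ _).le hIf) (jb_rpow_pos _ _).le)
          (mul_nonneg (mul_pos posDK (jb_rpow_pos _ _)).le
            (mul_pos posDL (jb_rpow_pos _ _)).le)
    _ = (Real.sqrt 2 ^ |t₁| * Real.sqrt 2 ^ |t₂| * (3 * Real.sqrt 2) ^ ωp) *
        (jb K ^ t₁ * jb L ^ t₂ *
          (jb DK ^ |t₁| * jb DL ^ |t₂| * (jb D ^ (2*ωp) * jb D ^ (-(2*(N:ℝ)))))) := by
        rw [Real.mul_rpow h2.le (jb_pos DK).le, Real.mul_rpow h2.le (jb_pos DL).le]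
        ring
    _ ≤ (Real.sqrt 2 ^ |t₁| * Real.sqrt 2 ^ |t₂| * (3 * Real.sqrt 2) ^ ωp) *
        (jb K ^ t₁ * jb L ^ t₂ * (jb DK ^ (-M) * jb DL ^ (-M))) := by
        apply mul_le_mul_of_nonneg_left _ posC.le
        exact mul_le_mul_of_nonneg_left P5
          (mul_pos (jb_rpow_pos _ _) (jb_rpow_pos _ _)).le
    _ = Cw t₁ t₂ ω * (jb K ^ t₁ * jb L ^ t₂ * (jb DK ^ (-M) * jb DL ^ (-M))) := rfl

end Stmt10Aux
namespace Stmt10Aux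
open MeasureTheory

variable {ι : Type*}

lemma nestNorm_mono {p : ℝ≥0∞} {F G : ι → ℝ≥0∞} (h : ∀ i, F i ≤ G i) :
    nestNorm p F ≤ nestNorm p G := by
  unfold nestNorm
  split
  · exact iSup_mono h
  · refine ENNReal.rpow_le_rpow (ENNReal.tsum_le_tsum fun i => ?_) (by positivity)
    exact ENNReal.rpow_le_rpow (h i) ENNReal.toReal_nonneg

lemma toReal_pos_of_one_le {p : ℝ≥0∞} (hp : 1 ≤ p) (hp' : p ≠ ∞) : 0 < p.toReal :=
  ENNReal.toReal_pos (by intro h; rw [h] at hp; exact absurd hp (by simp)) hp'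

lemma one_le_toReal_of_one_le {p : ℝ≥0∞} (hp : 1 ≤ p) (hp' : p ≠ ∞) : 1 ≤ p.toReal := by
  rw [show (1:ℝ) = (1:ℝ≥0∞).toReal by simp]
  exact ENNReal.toReal_mono hp' hp

lemma nestNorm_const_mul {p : ℝ≥0∞} (hp : 1 ≤ p) (c : ℝ≥0∞) (F : ι → ℝ≥0∞) :
    nestNorm p (fun i => c * F i) = c * nestNorm p F := by
  unfold nestNorm
  split
  · rw [ENNReal.mul_iSup]
  · rename_i hp'
    have ht : 0 < p.toReal := toReal_pos_of_one_le hp hp'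
    have : ∀ i, (c * F i) ^ p.toReal = c ^ p.toReal * F i ^ p.toReal := fun i =>
      ENNReal.mul_rpow_of_nonneg _ _ ht.le
    simp_rw [this, ENNReal.tsum_mul_left]
    rw [ENNReal.mul_rpow_of_nonneg _ _ (by positivity), ← ENNReal.rpow_mul,
      mul_one_div_cancel ht.ne', ENNReal.rpow_one]

/-- Generalized Hölder inequality for `nestNorm`. -/
lemma nestNorm_mul_le [Countable ι] [MeasurableSpace ι] [MeasurableSingletonClass ι]
    {p q r : ℝ≥0∞} (hp : 1 ≤ p) (hq : 1 ≤ q) (hpqr : p⁻¹ + q⁻¹ = r⁻¹)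
    (F G : ι → ℝ≥0∞) :
    nestNorm r (fun i => F i * G i) ≤ nestNorm p F * nestNorm q G := by
  by_cases hpt : p = ∞
  · have hqr : q = r := by
      have h : q⁻¹ = r⁻¹ := by rw [← hpqr, hpt]; simp
      have := congrArg (·⁻¹) h
      simpa using this
    subst hqr
    have h1 : ∀ i, F i * G i ≤ (⨆ j, F j) * G i := fun i =>
      mul_le_mul_left (le_iSup F i) _
    calc nestNorm q (fun i => F i * G i) ≤ nestNorm q (fun i => (⨆ j, F j) * G i) :=
          nestNorm_mono h1
      _ = (⨆ j, F j) * nestNorm q G := nestNorm_const_mul hq _ G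
      _ = nestNorm p F * nestNorm q G := by rw [hpt]; rfl
  · by_cases hqt : q = ∞
    · have hpr : p = r := by
        have h : p⁻¹ = r⁻¹ := by rw [← hpqr, hqt]; simp
        have := congrArg (·⁻¹) h
        simpa using this
      subst hpr
      have h1 : ∀ i, F i * G i ≤ (⨆ j, G j) * F i := fun i => by
        rw [mul_comm]; exact mul_le_mul_left (le_iSup G i) _
      calc nestNorm p (fun i => F i * G i) ≤ nestNorm p (fun i => (⨆ j, G j) * F i) :=
            nestNorm_mono h1
        _ = (⨆ j, G j) * nestNorm p F := nestNorm_const_mul hp _ F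
        _ = nestNorm p F * nestNorm q G := by rw [hqt, mul_comm]; rfl
    · -- p, q finite, hence r finite
      have hrt : r ≠ ∞ := by
        intro h
        rw [h] at hpqr
        simp only [ENNReal.inv_top] at hpqr
        have := ENNReal.inv_ne_zero.mpr hpt
        exact this (by
          have h0 : p⁻¹ + q⁻¹ = 0 := hpqr
          exact (add_eq_zero.mp h0).1)
      set tp := p.toReal with htp'
      set tq := q.toReal with htq'
      set tr := r.toReal with htr'
      have htp : 0 < tp := toReal_pos_of_one_le hp hpt
      have htq : 0 < tq := toReal_pos_of_one_le hq hqt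
      have hrinv : r⁻¹ ≠ ∞ := by
        rw [← hpqr]
        exact ENNReal.add_ne_top.mpr ⟨by simpa using (zero_lt_one.trans_le hp).ne',
          by simpa using (zero_lt_one.trans_le hq).ne'⟩
      have hr0 : r ≠ 0 := by simpa using hrinv
      have htr : 0 < tr := ENNReal.toReal_pos hr0 hrt
      have hrel : tp⁻¹ + tq⁻¹ = tr⁻¹ := by
        have := congrArg ENNReal.toReal hpqr
        rw [ENNReal.toReal_add (by simpa using (zero_lt_one.trans_le hp).ne')
          (by simpa using (zero_lt_one.trans_le hq).ne'), ENNReal.toReal_inv,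
          ENNReal.toReal_inv, ENNReal.toReal_inv] at this
        exact this
      have htrp : tr < tp := by
        have h1 : tr⁻¹ > tp⁻¹ := by
          rw [← hrel]
          have : 0 < tq⁻¹ := by positivity
          linarith
        exact (inv_lt_inv₀ htp (by positivity)).mp h1  -- name?
      set a := tp / tr with ha'
      set b := tq / tr with hb'
      have hab : a.HolderConjugate b := by
        rw [Real.holderConjugate_iff]
        constructor
        · rw [ha']; exact (one_lt_div htr).mpr htrp
        · have h' := hrel
          field_simp at h'
          rw [ha', hb']
          field_simp
          try linarith
          try nlinarith [h', htp, htq, htr]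
      have key := ENNReal.lintegral_mul_le_Lp_mul_Lq (Measure.count : Measure ι) hab
        (measurable_of_countable (fun i => F i ^ tr)).aemeasurable
        (measurable_of_countable (fun i => G i ^ tr)).aemeasurable
      rw [lintegral_count, lintegral_count, lintegral_count] at key
      have hta : tr * a = tp := by
        rw [ha', mul_comm, div_mul_cancel₀ _ htr.ne']
      have htb : tr * b = tq := by
        rw [hb', mul_comm, div_mul_cancel₀ _ htr.ne']
      have e1 : ∀ i, (F i ^ tr) ^ a = F i ^ tp := fun i => by
        rw [← ENNReal.rpow_mul, hta]
      have e2 : ∀ i, (G i ^ tr) ^ b = G i ^ tq := fun i => by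
        rw [← ENNReal.rpow_mul, htb]
      simp_rw [e1, e2] at key
      have key2 : ∑' i, (F i * G i) ^ tr ≤
          (∑' i, F i ^ tp) ^ (1/a) * (∑' i, G i ^ tq) ^ (1/b) := by
        calc ∑' i, (F i * G i) ^ tr = ∑' i, F i ^ tr * G i ^ tr := by
              congr 1; funext i; exact ENNReal.mul_rpow_of_nonneg _ _ htr.le
          _ ≤ _ := key
      unfold nestNorm
      rw [if_neg hrt, if_neg hpt, if_neg hqt]
      calc (∑' i, (F i * G i) ^ tr) ^ (1/tr)
          ≤ ((∑' i, F i ^ tp) ^ (1/a) * (∑' i, G i ^ tq) ^ (1/b)) ^ (1/tr) :=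
            ENNReal.rpow_le_rpow key2 (by positivity)
        _ = (∑' i, F i ^ tp) ^ (1/tp) * (∑' i, G i ^ tq) ^ (1/tq) := by
            have ea : 1/a * (1/tr) = 1/tp := by
              rw [ha', one_div_div]
              field_simp
            have eb : 1/b * (1/tr) = 1/tq := by
              rw [hb', one_div_div]
              field_simp
            rw [ENNReal.mul_rpow_of_nonneg _ _ (by positivity),
              ← ENNReal.rpow_mul, ← ENNReal.rpow_mul, ea, eb]

end Stmt10Aux
namespace Stmt10Aux
open MeasureTheory

variable {ι : Type*} [Countable ι] [MeasurableSpace ι] [MeasurableSingletonClass ι]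
variable {κ : Type*} [Countable κ]

/-- Finite Minkowski inequality for `tsum`s. -/
lemma finset_minkowski {t : ℝ} (ht : 1 ≤ t) (G : κ → ι → ℝ≥0∞) (s : Finset κ) :
    (∑' j, (∑ m ∈ s, G m j) ^ t) ^ (1/t) ≤ ∑ m ∈ s, (∑' j, (G m j) ^ t) ^ (1/t) := by
  have ht0 : 0 < t := lt_of_lt_of_le zero_lt_one ht
  induction s using Finset.cons_induction with
  | empty =>
      simp only [Finset.sum_empty, ENNReal.zero_rpow_of_pos ht0, tsum_zero,
        ENNReal.zero_rpow_of_pos (show (0:ℝ) < 1/t by positivity), le_refl]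
  | cons a s ha ih =>
      simp only [Finset.sum_cons]
      have key := ENNReal.lintegral_Lp_add_le
        (μ := (Measure.count : Measure ι))
        (measurable_of_countable (fun j => G a j)).aemeasurable
        (measurable_of_countable (fun j => ∑ m ∈ s, G m j)).aemeasurable ht
      rw [lintegral_count, lintegral_count, lintegral_count] at key
      calc (∑' j, (G a j + ∑ m ∈ s, G m j) ^ t) ^ (1/t)
          ≤ (∑' j, (G a j) ^ t) ^ (1/t) + (∑' j, (∑ m ∈ s, G m j) ^ t) ^ (1/t) := by
            simpa [Finset.sum_cons] using key
        _ ≤ (∑' j, (G a j) ^ t) ^ (1/t) + ∑ m ∈ s, (∑' j, (G m j) ^ t) ^ (1/t) :=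
            add_le_add_right ih _

/-- Countable Minkowski inequality for `nestNorm`. -/
lemma nestNorm_tsum_le {p : ℝ≥0∞} (hp : 1 ≤ p) (G : κ → ι → ℝ≥0∞) :
    nestNorm p (fun j => ∑' m, G m j) ≤ ∑' m, nestNorm p (G m) := by
  classical
  unfold nestNorm
  split
  · apply iSup_le
    intro j
    exact ENNReal.tsum_le_tsum fun m => le_iSup (fun j' => G m j') j
  · rename_i hpt
    set t := p.toReal with htdef
    have ht1 : 1 ≤ t := one_le_toReal_of_one_le hp hpt
    have ht0 : 0 < t := lt_of_lt_of_le zero_lt_one ht1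
    have hmono : Monotone fun x : ℝ≥0∞ => x ^ t := fun x y h =>
      ENNReal.rpow_le_rpow h ht0.le
    have hcont : Continuous fun x : ℝ≥0∞ => x ^ t := ENNReal.continuous_rpow_const
    have hbot : (⊥ : ℝ≥0∞) ^ t = ⊥ := by
      simp only [bot_eq_zero]
      exact ENNReal.zero_rpow_of_pos ht0
    have step1 : ∀ j, (∑' m, G m j) ^ t = ⨆ s : Finset κ, (∑ m ∈ s, G m j) ^ t := by
      intro j
      rw [ENNReal.tsum_eq_iSup_sum]
      exact Monotone.map_iSup_of_continuousAt hcont.continuousAt hmono hbot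
    have hdir : Directed (· ≤ ·) fun s : Finset κ => fun j => (∑ m ∈ s, G m j) ^ t := by
      intro s₁ s₂
      refine ⟨s₁ ∪ s₂, fun j => ?_, fun j => ?_⟩
      · exact hmono (Finset.sum_le_sum_of_subset Finset.subset_union_left)
      · exact hmono (Finset.sum_le_sum_of_subset Finset.subset_union_right)
    have step2 : ∑' j, (∑' m, G m j) ^ t =
        ⨆ s : Finset κ, ∑' j, (∑ m ∈ s, G m j) ^ t := by
      simp_rw [step1]
      rw [← lintegral_count]
      rw [lintegral_iSup_directed
        (fun s => (measurable_of_countable _).aemeasurable) hdir]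
      simp_rw [lintegral_count]
    rw [step2]
    have hmono' : Monotone fun x : ℝ≥0∞ => x ^ (1/t) := fun x y h =>
      ENNReal.rpow_le_rpow h (by positivity)
    have hbot' : (⊥ : ℝ≥0∞) ^ (1/t) = ⊥ := by
      simp only [bot_eq_zero]
      exact ENNReal.zero_rpow_of_pos (by positivity)
    rw [Monotone.map_iSup_of_continuousAt
      (ENNReal.continuous_rpow_const).continuousAt hmono' hbot']
    apply iSup_le
    intro s
    exact (finset_minkowski ht1 G s).trans (ENNReal.sum_le_tsum s)

end Stmt10Aux
namespace Stmt10Aux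
open MeasureTheory

lemma nestNorm_translate {d : ℕ} (p : ℝ≥0∞) (A : Zd d → ℝ≥0∞) (m : Zd d) :
    nestNorm p (fun j => A (j - m)) = nestNorm p A := by
  unfold nestNorm
  split
  · apply le_antisymm
    · exact iSup_le fun j => le_iSup A (j - m)
    · apply iSup_le
      intro j
      have : A j = A ((j + m) - m) := by rw [add_sub_cancel_right]
      rw [this]
      exact le_iSup (fun j' => A (j' - m)) (j + m)
  · congr 1
    exact (Equiv.subRight m).tsum_eq (fun j => A j ^ p.toReal)

/-- Young-type inequality: convolution with a fixed kernel. -/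
lemma nestNorm_conv_le {d : ℕ} {p : ℝ≥0∞} (hp : 1 ≤ p)
    (Φ A : Zd d → ℝ≥0∞) :
    nestNorm p (fun j => ∑' k, Φ (j - k) * A k) ≤ (∑' m, Φ m) * nestNorm p A := by
  have hrw : ∀ j : Zd d, ∑' k, Φ (j - k) * A k = ∑' m, Φ m * A (j - m) := by
    intro j
    have := (Equiv.subLeft j).tsum_eq (fun k => Φ (j - k) * A k)
    rw [← this]
    congr 1
    funext m
    simp [Equiv.subLeft]
  calc nestNorm p (fun j => ∑' k, Φ (j - k) * A k)
      = nestNorm p (fun j => ∑' m, Φ m * A (j - m)) := by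
        congr 1; funext j; exact hrw j
    _ ≤ ∑' m, nestNorm p (fun j => Φ m * A (j - m)) :=
        nestNorm_tsum_le hp (fun m j => Φ m * A (j - m))
    _ = ∑' m, Φ m * nestNorm p A := by
        congr 1
        funext m
        rw [nestNorm_const_mul hp, nestNorm_translate]
    _ = (∑' m, Φ m) * nestNorm p A := ENNReal.tsum_mul_right

end Stmt10Aux
namespace Stmt10Aux

lemma tsum_pi_prod (Ψ : ℤ → ℝ≥0∞) :
    ∀ d : ℕ, ∑' m : Zd d, ∏ i, Ψ (m i) = (∑' n : ℤ, Ψ n) ^ d := by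
  intro d
  induction d with
  | zero =>
      rw [tsum_eq_single (default : Zd 0) (fun b hb =>
        absurd (Subsingleton.elim b default) hb)]
      simp
  | succ d ih =>
      set e := Fin.consEquiv (fun _ : Fin (d+1) => ℤ) with he
      rw [← e.tsum_eq (fun m : Zd (d+1) => ∏ i, Ψ (m i))]
      have : ∀ y : ℤ × (Zd d),
          (∏ i, Ψ ((e y) i)) = Ψ y.1 * ∏ i : Fin d, Ψ (y.2 i) := by
        rintro ⟨n, mm⟩
        rw [Fin.prod_univ_succ]
        simp [he, Fin.consEquiv]
      calc ∑' y : ℤ × (Zd d), ∏ i, Ψ ((e y) i)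
          = ∑' n : ℤ, ∑' mm : Zd d, Ψ n * ∏ i : Fin d, Ψ (mm i) := by
            rw [ENNReal.tsum_prod']
            congr 1; funext n; congr 1; funext mm
            exact this (n, mm)
        _ = (∑' n : ℤ, Ψ n) * (∑' n : ℤ, Ψ n) ^ d := by
            simp_rw [ENNReal.tsum_mul_left]
            rw [ih, ENNReal.tsum_mul_right]
        _ = (∑' n : ℤ, Ψ n) ^ (d+1) := by rw [pow_succ]; ring
  
lemma jb_int_summable {μ : ℝ} (hμ : 1 < μ) :
    Summable fun n : ℤ => jb (n : ℝ) ^ (-μ) := by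
  have hf : Summable fun n : ℤ => |(n : ℝ)| ^ (-μ) := Real.summable_abs_int_rpow hμ
  have hi : Summable fun n : ℤ => if n = 0 then (1:ℝ) else 0 := by
    apply summable_of_ne_finset_zero (s := {0})
    intro b hb
    simp only [Finset.mem_singleton] at hb
    simp [hb]
  apply Summable.of_norm_bounded
    (g := fun n : ℤ => |(n : ℝ)| ^ (-μ) + if n = 0 then (1:ℝ) else 0) (hf.add hi)
  intro n
  rw [Real.norm_eq_abs, abs_of_nonneg (jb_rpow_pos _ _).le]
  by_cases hn : n = 0
  · subst hn
    simp only [if_pos rfl]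
    have : jb ((0:ℤ) : ℝ) = 1 := by
      simp [jb]
    rw [this, Real.one_rpow]
    have h0 : |((0:ℤ):ℝ)| ^ (-μ) = 0 := by
      rw [show |((0:ℤ):ℝ)| = 0 by simp, Real.zero_rpow (by linarith : -μ ≠ 0)]
    rw [h0]
    norm_num
  · simp only [if_neg hn, add_zero]
    have h1 : (1:ℝ) ≤ |(n:ℝ)| := by
      have : (1:ℤ) ≤ |n| := Int.one_le_abs (by exact_mod_cast hn)
      calc (1:ℝ) ≤ (|n| : ℤ) := by exact_mod_cast this
        _ = |(n:ℝ)| := by push_cast; ring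
    have h2 : |(n:ℝ)| ≤ jb (n:ℝ) := by
      unfold jb
      rw [← Real.sqrt_sq_eq_abs]
      exact Real.sqrt_le_sqrt (by nlinarith)
    exact Real.rpow_le_rpow_of_nonpos (by linarith) h2 (by linarith)

lemma jb_prod_bound {d : ℕ} (hd : 1 ≤ d) {M : ℝ} (hM0 : 0 ≤ M) (m : Zd d) :
    jb (znorm m) ^ (-M) ≤ ∏ i, jb ((m i : ℝ)) ^ (-(M/(d:ℝ))) := by
  have hd0 : (0:ℝ) < d := by exact_mod_cast hd
  have hle : ∀ i, jb ((m i : ℝ)) ≤ jb (znorm m) := by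
    intro i
    have hsq : ((m i : ℝ))^2 ≤ znorm m ^ 2 := by
      unfold znorm
      rw [Real.sq_sqrt (by positivity)]
      exact Finset.single_le_sum (f := fun i => ((m i : ℝ))^2)
        (fun i _ => by positivity) (Finset.mem_univ i)
    unfold jb
    exact Real.sqrt_le_sqrt (by nlinarith)
  have hprod : ∏ i, jb ((m i : ℝ)) ^ (M/(d:ℝ)) ≤ jb (znorm m) ^ M := by
    calc ∏ i, jb ((m i : ℝ)) ^ (M/(d:ℝ))
        ≤ ∏ i : Fin d, jb (znorm m) ^ (M/(d:ℝ)) := by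
          apply Finset.prod_le_prod (fun i _ => (jb_rpow_pos _ _).le)
          exact fun i _ => Real.rpow_le_rpow (jb_pos _).le (hle i) (by positivity)
      _ = (jb (znorm m) ^ (M/(d:ℝ))) ^ (d:ℕ) := by
          rw [Finset.prod_const, Finset.card_univ, Fintype.card_fin]
      _ = jb (znorm m) ^ M := by
          rw [← Real.rpow_natCast (jb (znorm m) ^ (M/(d:ℝ))) d, ← Real.rpow_mul (jb_pos _).le]
          congr 1
          field_simp
  calc jb (znorm m) ^ (-M) = (jb (znorm m) ^ M)⁻¹ := by
        rw [Real.rpow_neg (jb_pos _).le]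
    _ ≤ (∏ i, jb ((m i : ℝ)) ^ (M/(d:ℝ)))⁻¹ := by
        apply inv_anti₀ _ hprod
        exact Finset.prod_pos fun i _ => jb_rpow_pos _ _
    _ = ∏ i, jb ((m i : ℝ)) ^ (-(M/(d:ℝ))) := by
        rw [← Finset.prod_inv_distrib]
        congr 1
        funext i
        rw [Real.rpow_neg (jb_pos _).le]

lemma Phi_lt_top {d : ℕ} (hd : 1 ≤ d) {M : ℝ} (hM : (d:ℝ) < M) :
    ∑' m : Zd d, ENNReal.ofReal (jb (znorm m) ^ (-M)) < ∞ := by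
  have hd0 : (0:ℝ) < d := by exact_mod_cast hd
  have hM0 : 0 ≤ M := le_of_lt (lt_of_le_of_lt hd0.le hM)
  have hμ : 1 < M / (d:ℝ) := (one_lt_div hd0).mpr hM
  set ψ : ℤ → ℝ := fun n => jb (n : ℝ) ^ (-(M/(d:ℝ))) with hψ
  have hψs : Summable ψ := jb_int_summable hμ
  have hψnn : ∀ n, 0 ≤ ψ n := fun n => (jb_rpow_pos _ _).le
  set Ψ : ℤ → ℝ≥0∞ := fun n => ENNReal.ofReal (ψ n) with hΨ
  have step1 : ∀ m : Zd d, ENNReal.ofReal (jb (znorm m) ^ (-M)) ≤ ∏ i, Ψ (m i) := by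
    intro m
    calc ENNReal.ofReal (jb (znorm m) ^ (-M))
        ≤ ENNReal.ofReal (∏ i, jb ((m i : ℝ)) ^ (-(M/(d:ℝ)))) :=
          ENNReal.ofReal_le_ofReal (jb_prod_bound hd hM0 m)
      _ = ∏ i, Ψ (m i) := by
          rw [hΨ, hψ]
          induction (Finset.univ : Finset (Fin d)) using Finset.cons_induction with
          | empty => simp
          | cons a s ha ih =>
              rw [Finset.prod_cons, Finset.prod_cons, ENNReal.ofReal_mul (hψnn _), ih]
  calc ∑' m : Zd d, ENNReal.ofReal (jb (znorm m) ^ (-M))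
      ≤ ∑' m : Zd d, ∏ i, Ψ (m i) := ENNReal.tsum_le_tsum step1
    _ = (∑' n : ℤ, Ψ n) ^ d := tsum_pi_prod Ψ d
    _ < ∞ := by
        apply ENNReal.pow_lt_top
        rw [hΨ, ← ENNReal.ofReal_tsum_of_nonneg hψnn hψs]
        exact ENNReal.ofReal_lt_top

end Stmt10Aux
namespace Stmt10Aux

lemma ofReal_norm_tsum_le {ι : Type*} (h : ι → ℂ) :
    ENNReal.ofReal ‖∑' i, h i‖ ≤ ∑' i, ENNReal.ofReal ‖h i‖ := by
  by_cases hs : Summable fun i => ‖h i‖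
  · calc ENNReal.ofReal ‖∑' i, h i‖
        ≤ ENNReal.ofReal (∑' i, ‖h i‖) :=
          ENNReal.ofReal_le_ofReal (norm_tsum_le_tsum_norm hs)
      _ = ∑' i, ENNReal.ofReal ‖h i‖ :=
          ENNReal.ofReal_tsum_of_nonneg (fun i => norm_nonneg _) hs
  · have h1 : ∑' i, ENNReal.ofReal ‖h i‖ = ∞ := by
      have h2 : (fun i => ENNReal.ofReal ‖h i‖) = fun i => ((‖h i‖₊ : ℝ≥0) : ℝ≥0∞) :=
        funext fun i => ofReal_norm (h i)
      rw [h2]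
      by_contra hne
      have := ENNReal.tsum_coe_ne_top_iff_summable.mp hne
      exact hs (NNReal.summable_coe.mpr this)
    rw [h1]
    exact le_top

lemma ofReal_mul_norm_tsum_le {ι : Type*} {c : ℝ} (hc : 0 ≤ c) (h : ι → ℂ) :
    ENNReal.ofReal (c * ‖∑' i, h i‖) ≤ ∑' i, ENNReal.ofReal (c * ‖h i‖) := by
  rw [ENNReal.ofReal_mul hc]
  refine le_trans (mul_le_mul_right (ofReal_norm_tsum_le h) _) ?_
  rw [← ENNReal.tsum_mul_left]
  exact le_of_eq (by congr 1; funext i; rw [ENNReal.ofReal_mul hc])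

/-- The master boundedness lemma. -/
lemma master {d : ℕ} (hd : 1 ≤ d) (s₁ s₂ ω M : ℝ) (hdM : (d:ℝ) < M)
    (Θ : Zd d → Zd d → Zd d → ℂ) (C₀ : ℝ) (hC₀ : 0 < C₀)
    (hker : ∀ j k l : Zd d, jb (znorm j) ^ (s₁+s₂) * ‖Θ j k l‖ ≤
      C₀ * (jb (znorm k) ^ (s₁+ω) * jb (znorm l) ^ (s₂+ω) *
        (jb (znorm (j-k)) ^ (-M) * jb (znorm (j-l)) ^ (-M))))
    (p q r : ℝ≥0∞) (hp : 1 ≤ p) (hq : 1 ≤ q) (hr : 1 ≤ r)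
    (hpqr : p⁻¹ + q⁻¹ = r⁻¹) :
    ∃ C : ℝ, 0 < C ∧ ∀ f g : Zd d → ℂ,
      wlpNorm r (s₁ + s₂) (Tbil Θ f g) ≤
        ENNReal.ofReal C * wlpNorm p (s₁ + ω) f * wlpNorm q (s₂ + ω) g := by
  set Φ : Zd d → ℝ≥0∞ := fun m => ENNReal.ofReal (jb (znorm m) ^ (-M)) with hΦ
  set SΦ : ℝ≥0∞ := ∑' m, Φ m with hSΦdef
  have hSΦ : SΦ < ∞ := Phi_lt_top hd hdM
  set x : ℝ := SΦ.toReal + 1 with hx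
  have hx0 : 0 < x := by positivity
  have hSx : SΦ ≤ ENNReal.ofReal x := by
    rw [hx]
    calc SΦ = ENNReal.ofReal SΦ.toReal := (ENNReal.ofReal_toReal hSΦ.ne).symm
      _ ≤ ENNReal.ofReal (SΦ.toReal + 1) := ENNReal.ofReal_le_ofReal (by linarith)
  refine ⟨C₀ * x ^ 2, by positivity, fun f g => ?_⟩
  set A : Zd d → ℝ≥0∞ := fun k => ENNReal.ofReal (jb (znorm k) ^ (s₁+ω) * ‖f k‖) with hA
  set B : Zd d → ℝ≥0∞ := fun l => ENNReal.ofReal (jb (znorm l) ^ (s₂+ω) * ‖g l‖) with hB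
  set CA : Zd d → ℝ≥0∞ := fun j => ∑' k, Φ (j - k) * A k with hCA
  set CB : Zd d → ℝ≥0∞ := fun j => ∑' l, Φ (j - l) * B l with hCB
  -- pointwise claim
  have claim : ∀ j : Zd d,
      ENNReal.ofReal (jb (znorm j) ^ (s₁+s₂) * ‖Tbil Θ f g j‖) ≤
        ENNReal.ofReal C₀ * (CA j * CB j) := by
    intro j
    set w : ℝ := jb (znorm j) ^ (s₁+s₂) with hw
    have hw0 : 0 ≤ w := (jb_rpow_pos _ _).le
    have step1 : ENNReal.ofReal (w * ‖Tbil Θ f g j‖) ≤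
        ∑' k, ∑' l, ENNReal.ofReal (w * ‖Θ j k l * f k * g l‖) := by
      calc ENNReal.ofReal (w * ‖Tbil Θ f g j‖)
          ≤ ∑' k, ENNReal.ofReal (w * ‖∑' l, Θ j k l * f k * g l‖) :=
            ofReal_mul_norm_tsum_le hw0 _
        _ ≤ ∑' k, ∑' l, ENNReal.ofReal (w * ‖Θ j k l * f k * g l‖) :=
            ENNReal.tsum_le_tsum fun k => ofReal_mul_norm_tsum_le hw0 _
    have step2 : ∀ k l : Zd d, ENNReal.ofReal (w * ‖Θ j k l * f k * g l‖) ≤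
        ENNReal.ofReal C₀ * ((Φ (j - k) * A k) * (Φ (j - l) * B l)) := by
      intro k l
      have hnorm : ‖Θ j k l * f k * g l‖ = ‖Θ j k l‖ * ‖f k‖ * ‖g l‖ := by
        rw [norm_mul, norm_mul]
      have hre : w * ‖Θ j k l * f k * g l‖ ≤
          C₀ * ((jb (znorm (j-k)) ^ (-M) * (jb (znorm k) ^ (s₁+ω) * ‖f k‖)) *
            (jb (znorm (j-l)) ^ (-M) * (jb (znorm l) ^ (s₂+ω) * ‖g l‖))) := by
        rw [hnorm]
        have h1 := hker j k l
        have h2 : (w * ‖Θ j k l‖) * (‖f k‖ * ‖g l‖) ≤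
            (C₀ * (jb (znorm k) ^ (s₁+ω) * jb (znorm l) ^ (s₂+ω) *
              (jb (znorm (j-k)) ^ (-M) * jb (znorm (j-l)) ^ (-M)))) * (‖f k‖ * ‖g l‖) :=
          mul_le_mul_of_nonneg_right h1 (by positivity)
        calc w * (‖Θ j k l‖ * ‖f k‖ * ‖g l‖)
            = (w * ‖Θ j k l‖) * (‖f k‖ * ‖g l‖) := by ring
          _ ≤ _ := h2
          _ = _ := by ring
      calc ENNReal.ofReal (w * ‖Θ j k l * f k * g l‖)
          ≤ ENNReal.ofReal (C₀ *
              ((jb (znorm (j-k)) ^ (-M) * (jb (znorm k) ^ (s₁+ω) * ‖f k‖)) *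
               (jb (znorm (j-l)) ^ (-M) * (jb (znorm l) ^ (s₂+ω) * ‖g l‖)))) :=
            ENNReal.ofReal_le_ofReal hre
        _ = ENNReal.ofReal C₀ * ((Φ (j - k) * A k) * (Φ (j - l) * B l)) := by
            have hXa : ENNReal.ofReal
                (jb (znorm (j-k)) ^ (-M) * (jb (znorm k) ^ (s₁+ω) * ‖f k‖)) =
                Φ (j - k) * A k := ENNReal.ofReal_mul (jb_rpow_pos _ _).le
            have hXb : ENNReal.ofReal
                (jb (znorm (j-l)) ^ (-M) * (jb (znorm l) ^ (s₂+ω) * ‖g l‖)) =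
                Φ (j - l) * B l := ENNReal.ofReal_mul (jb_rpow_pos _ _).le
            rw [ENNReal.ofReal_mul hC₀.le,
              ENNReal.ofReal_mul (mul_nonneg (jb_rpow_pos _ _).le
                (mul_nonneg (jb_rpow_pos _ _).le (norm_nonneg _))), hXa, hXb]
    calc ENNReal.ofReal (w * ‖Tbil Θ f g j‖)
        ≤ ∑' k, ∑' l, ENNReal.ofReal (w * ‖Θ j k l * f k * g l‖) := step1
      _ ≤ ∑' k, ∑' l, ENNReal.ofReal C₀ * ((Φ (j - k) * A k) * (Φ (j - l) * B l)) :=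
          ENNReal.tsum_le_tsum fun k => ENNReal.tsum_le_tsum fun l => step2 k l
      _ = ENNReal.ofReal C₀ * (CA j * CB j) := by
          have inner : ∀ k, ∑' l, ENNReal.ofReal C₀ * ((Φ (j-k) * A k) * (Φ (j-l) * B l))
              = (ENNReal.ofReal C₀ * (Φ (j-k) * A k)) * CB j := by
            intro k
            calc ∑' l, ENNReal.ofReal C₀ * ((Φ (j-k) * A k) * (Φ (j-l) * B l))
                = ∑' l, (ENNReal.ofReal C₀ * (Φ (j-k) * A k)) * (Φ (j-l) * B l) :=
                  tsum_congr fun l => by ring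
              _ = (ENNReal.ofReal C₀ * (Φ (j-k) * A k)) * ∑' l, (Φ (j-l) * B l) :=
                  ENNReal.tsum_mul_left
              _ = (ENNReal.ofReal C₀ * (Φ (j-k) * A k)) * CB j := rfl
          calc ∑' k, ∑' l, ENNReal.ofReal C₀ * ((Φ (j-k) * A k) * (Φ (j-l) * B l))
              = ∑' k, (ENNReal.ofReal C₀ * (Φ (j-k) * A k)) * CB j :=
                tsum_congr fun k => inner k
            _ = ∑' k, (ENNReal.ofReal C₀ * CB j) * (Φ (j-k) * A k) :=
                tsum_congr fun k => by ring
            _ = (ENNReal.ofReal C₀ * CB j) * ∑' k, (Φ (j-k) * A k) := ENNReal.tsum_mul_left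
            _ = ENNReal.ofReal C₀ * (CA j * CB j) := by rw [hCA]; ring
  -- main chain
  have main : wlpNorm r (s₁ + s₂) (Tbil Θ f g) ≤
      (ENNReal.ofReal C₀ * SΦ * SΦ) * (wlpNorm p (s₁ + ω) f * wlpNorm q (s₂ + ω) g) := by
    have e1 : wlpNorm r (s₁ + s₂) (Tbil Θ f g) =
        nestNorm r (fun j => ENNReal.ofReal (jb (znorm j) ^ (s₁+s₂) * ‖Tbil Θ f g j‖)) := rfl
    have e2 : wlpNorm p (s₁ + ω) f = nestNorm p A := rfl
    have e3 : wlpNorm q (s₂ + ω) g = nestNorm q B := rfl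
    rw [e1, e2, e3]
    calc nestNorm r (fun j => ENNReal.ofReal (jb (znorm j) ^ (s₁+s₂) * ‖Tbil Θ f g j‖))
        ≤ nestNorm r (fun j => ENNReal.ofReal C₀ * (CA j * CB j)) := nestNorm_mono claim
      _ = ENNReal.ofReal C₀ * nestNorm r (fun j => CA j * CB j) := nestNorm_const_mul hr _ _
      _ ≤ ENNReal.ofReal C₀ * (nestNorm p CA * nestNorm q CB) :=
          mul_le_mul_right (nestNorm_mul_le hp hq hpqr CA CB) _
      _ ≤ ENNReal.ofReal C₀ * ((SΦ * nestNorm p A) * (SΦ * nestNorm q B)) := by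
          apply mul_le_mul_right
          exact mul_le_mul' (nestNorm_conv_le hp Φ A) (nestNorm_conv_le hq Φ B)
      _ = (ENNReal.ofReal C₀ * SΦ * SΦ) * (nestNorm p A * nestNorm q B) := by ring
  refine main.trans ?_
  have hconst : ENNReal.ofReal C₀ * SΦ * SΦ ≤ ENNReal.ofReal (C₀ * x ^ 2) := by
    calc ENNReal.ofReal C₀ * SΦ * SΦ
        ≤ ENNReal.ofReal C₀ * ENNReal.ofReal x * ENNReal.ofReal x :=
          mul_le_mul' (mul_le_mul' le_rfl hSx) hSx
      _ = ENNReal.ofReal (C₀ * x ^ 2) := by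
          rw [← ENNReal.ofReal_mul hC₀.le, ← ENNReal.ofReal_mul (by positivity)]
          congr 1
          ring
  calc (ENNReal.ofReal C₀ * SΦ * SΦ) * (wlpNorm p (s₁ + ω) f * wlpNorm q (s₂ + ω) g)
      ≤ ENNReal.ofReal (C₀ * x ^ 2) * (wlpNorm p (s₁ + ω) f * wlpNorm q (s₂ + ω) g) :=
        mul_le_mul_left hconst _
    _ = ENNReal.ofReal (C₀ * x ^ 2) * wlpNorm p (s₁ + ω) f * wlpNorm q (s₂ + ω) g := by
        ring

end Stmt10Aux
namespace Stmt10Aux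

lemma Delta2_zero {d : ℕ} (Θ : Zd d → Zd d → Zd d → ℂ) : Delta2 0 Θ = Θ := by
  unfold Delta2
  have : ∀ L : List (Fin d),
      L.foldr (fun m F =>
        (D2 (Pi.single m (Int.sign ((0:Zd d) m))))^[((0:Zd d) m).natAbs] ∘ F) id
      = (id : (Zd d → Zd d → Zd d → ℂ) → _) := by
    intro L
    induction L with
    | nil => rfl
    | cons a L ih =>
        rw [List.foldr_cons, ih]
        simp
  rw [this]
  rfl

lemma Delta3_zero {d : ℕ} (Θ : Zd d → Zd d → Zd d → ℂ) : Delta3 0 Θ = Θ := by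
  unfold Delta3
  have : ∀ L : List (Fin d),
      L.foldr (fun m F =>
        (D3 (Pi.single m (Int.sign ((0:Zd d) m))))^[((0:Zd d) m).natAbs] ∘ F) id
      = (id : (Zd d → Zd d → Zd d → ℂ) → _) := by
    intro L
    induction L with
    | nil => rfl
    | cons a L ih =>
        rw [List.foldr_cons, ih]
        simp
  rw [this]
  rfl

lemma l1norm_zero {d : ℕ} : l1norm (0 : Zd d) = 0 := by
  simp [l1norm]

lemma part1 {d : ℕ} (hd : 1 ≤ d) (s₁ s₂ ω : ℝ) (N : ℕ)
    (hN : (N : ℝ) > (d : ℝ) + max ω 0 + (|s₁ + ω| + |s₂ + ω|) / 2)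
    (Θ : Zd d → Zd d → Zd d → ℂ)
    (hΘ₁ : 0 ≤ ω → BT ω N Θ) (hΘ₂ : ω < 0 → BT (2 * ω) N Θ)
    (p q r : ℝ≥0∞) (hp : 1 ≤ p) (hq : 1 ≤ q) (hr : 1 ≤ r)
    (hpqr : p⁻¹ + q⁻¹ = r⁻¹) :
    ∃ C : ℝ, 0 < C ∧ ∀ f g : Zd d → ℂ,
      wlpNorm r (s₁ + s₂) (Tbil Θ f g) ≤
        ENNReal.ofReal C * wlpNorm p (s₁ + ω) f * wlpNorm q (s₂ + ω) g := by
  set M := (N:ℝ) - max ω 0 - (|s₁+ω| + |s₂+ω|)/2 with hMdef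
  have hdM : (d:ℝ) < M := by rw [hMdef]; linarith
  have hd0 : (0:ℝ) ≤ (d:ℝ) := Nat.cast_nonneg d
  have hM0 : 0 ≤ M := le_of_lt (lt_of_le_of_lt hd0 hdM)
  -- pointwise bound on Θ with the correct branch
  have hbound : ∃ C1 : ℝ, 0 < C1 ∧ ∀ j k l : Zd d, ‖Θ j k l‖ ≤ C1 *
      ((if 0 ≤ ω then jb (znorm j + znorm k + znorm l) ^ ω
        else jb (znorm j + znorm k + znorm l) ^ (2*ω)) *
        jb (znorm (j-k) + znorm (j-l)) ^ (-(2 * (N:ℝ)))) := by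
    by_cases hω : 0 ≤ ω
    · obtain ⟨C1, hC1, hb⟩ := hΘ₁ hω 0 0
      refine ⟨C1, hC1, fun j k l => ?_⟩
      have h := hb j k l
      rw [Delta3_zero, Delta2_zero, l1norm_zero, sub_zero, sub_zero] at h
      rw [if_pos hω, ← mul_assoc]
      exact h
    · push_neg at hω
      obtain ⟨C1, hC1, hb⟩ := hΘ₂ hω 0 0
      refine ⟨C1, hC1, fun j k l => ?_⟩
      have h := hb j k l
      rw [Delta3_zero, Delta2_zero, l1norm_zero, sub_zero, sub_zero] at h
      rw [if_neg (not_le.mpr hω), ← mul_assoc]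
      exact h
  obtain ⟨C1, hC1, hb⟩ := hbound
  have hker : ∀ j k l : Zd d, jb (znorm j) ^ (s₁+s₂) * ‖Θ j k l‖ ≤
      (C1 * Cw (s₁+ω) (s₂+ω) ω) * (jb (znorm k) ^ (s₁+ω) * jb (znorm l) ^ (s₂+ω) *
        (jb (znorm (j-k)) ^ (-M) * jb (znorm (j-l)) ^ (-M))) := by
    intro j k l
    have wc := weight_chain s₁ s₂ ω M N hMdef hM0
      (znorm_nonneg j) (znorm_nonneg k) (znorm_nonneg l)
      (znorm_nonneg (j-k)) (znorm_nonneg (j-l))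
      (znorm_tri₁ j k) (znorm_tri₂ j k) (znorm_tri₁ j l) (znorm_tri₂ j l)
    calc jb (znorm j) ^ (s₁+s₂) * ‖Θ j k l‖
        ≤ jb (znorm j) ^ (s₁+s₂) * (C1 *
            ((if 0 ≤ ω then jb (znorm j + znorm k + znorm l) ^ ω
              else jb (znorm j + znorm k + znorm l) ^ (2*ω)) *
              jb (znorm (j-k) + znorm (j-l)) ^ (-(2 * (N:ℝ))))) :=
          mul_le_mul_of_nonneg_left (hb j k l) (jb_rpow_pos _ _).le
      _ = C1 * (jb (znorm j) ^ (s₁+s₂) *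
            ((if 0 ≤ ω then jb (znorm j + znorm k + znorm l) ^ ω
              else jb (znorm j + znorm k + znorm l) ^ (2*ω)) *
              jb (znorm (j-k) + znorm (j-l)) ^ (-(2 * (N:ℝ))))) := by ring
      _ ≤ C1 * (Cw (s₁+ω) (s₂+ω) ω * (jb (znorm k) ^ (s₁+ω) * jb (znorm l) ^ (s₂+ω) *
            (jb (znorm (j-k)) ^ (-M) * jb (znorm (j-l)) ^ (-M)))) :=
          mul_le_mul_of_nonneg_left wc hC1.le
      _ = (C1 * Cw (s₁+ω) (s₂+ω) ω) * (jb (znorm k) ^ (s₁+ω) * jb (znorm l) ^ (s₂+ω) *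
            (jb (znorm (j-k)) ^ (-M) * jb (znorm (j-l)) ^ (-M))) := by ring
  exact master hd s₁ s₂ ω M hdM Θ (C1 * Cw (s₁+ω) (s₂+ω) ω)
    (mul_pos hC1 (Cw_pos _ _ _)) hker p q r hp hq hr hpqr

end Stmt10Aux

open Stmt10Aux in
/-- Corollary 3: if `Θ ∈ BT^{ω,N}` (when `ω ≥ 0`) or `Θ ∈ BT^{2ω,N}`
(when `ω < 0`) for some `N ∈ ℕ` with `N > N₀ = d + ω₊ + (|s₁+ω|+|s₂+ω|)/2`, then
`𝒯_Θ : ℓ^p_{s₁+ω} × ℓ^q_{s₂+ω} → ℓ^r_{s₁+s₂}` is bounded; in particular, for every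
`Θ′ ∈ BT^0 = ∪_{N>d} BT^{0,N}`, `𝒯_{Θ′} : ℓ^p × ℓ^q → ℓ^r` is bounded. -/
theorem stmt_10 {d : ℕ} (hd : 1 ≤ d) (s₁ s₂ ω : ℝ) (N : ℕ)
    (hN : (N : ℝ) > (d : ℝ) + max ω 0 + (|s₁ + ω| + |s₂ + ω|) / 2)
    (Θ : Zd d → Zd d → Zd d → ℂ)
    (hΘ₁ : 0 ≤ ω → BT ω N Θ) (hΘ₂ : ω < 0 → BT (2 * ω) N Θ)
    (p q r : ℝ≥0∞) (hp : 1 ≤ p) (hq : 1 ≤ q) (hr : 1 ≤ r)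
    (hpqr : p⁻¹ + q⁻¹ = r⁻¹) :
    (∃ C : ℝ, 0 < C ∧ ∀ f g : Zd d → ℂ,
        wlpNorm r (s₁ + s₂) (Tbil Θ f g) ≤
          ENNReal.ofReal C * wlpNorm p (s₁ + ω) f * wlpNorm q (s₂ + ω) g) ∧
    (∀ Θ' : Zd d → Zd d → Zd d → ℂ, BT0 Θ' →
      ∃ C : ℝ, 0 < C ∧ ∀ f g : Zd d → ℂ,
        lpNorm r (Tbil Θ' f g) ≤ ENNReal.ofReal C * lpNorm p f * lpNorm q g) := by
  constructor
  · exact part1 hd s₁ s₂ ω N hN Θ hΘ₁ hΘ₂ p q r hp hq hr hpqr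
  · intro Θ' hΘ'
    obtain ⟨N', hdN', hBT⟩ := hΘ'
    have h0 : ((N' : ℕ) : ℝ) > (d : ℝ) + max (0:ℝ) 0 + (|0 + (0:ℝ)| + |0 + (0:ℝ)|) / 2 := by
      simp only [max_self, add_zero, abs_zero]
      norm_num
      exact_mod_cast hdN'
    obtain ⟨C, hC, hCb⟩ := part1 hd 0 0 0 N' h0 Θ'
      (fun _ => hBT) (fun h => absurd h (by norm_num)) p q r hp hq hr hpqr
    refine ⟨C, hC, fun f g => ?_⟩
    have e1 : lpNorm r (Tbil Θ' f g) = wlpNorm r ((0:ℝ) + 0) (Tbil Θ' f g) := by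
      unfold lpNorm wlpNorm
      congr 1
      funext k
      norm_num
    have e2 : lpNorm p f = wlpNorm p ((0:ℝ) + 0) f := by
      unfold lpNorm wlpNorm
      congr 1
      funext k
      norm_num
    have e3 : lpNorm q g = wlpNorm q ((0:ℝ) + 0) g := by
      unfold lpNorm wlpNorm
      congr 1
      funext k
      norm_num
    rw [e1, e2, e3]
    exact hCb f g

end
end
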